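/- arXiv:1705.01683 — 6 statements merged into one kernel-verified Lean document; each statement's English description precedes it below -/
import Mathlib

section
/- Let G be a simple graph of order n ≥ 2 and let K₁ be a single vertex. Then μ(G ∨ K₁) > ((n−1)/n)·μ(G) + 2·√(n−1)/n. -/
open SimpleGraph

/-- The spectral radius of a finite simple graph: the largest eigenvalue
(supremum of the real spectrum) of its adjacency matrix. -/
noncomputable def specRad {V : Type*} [Fintype V] (G : SimpleGraph V) : ℝ :=
  letI := Classical.decEq V
  letI := Classical.decRel G.Adj
  sSup (spectrum ℝ (G.adjMatrix ℝ))

/-- The signless Laplacian spectral radius of a finite simple graph: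
the largest eigenvalue of `D(G) + A(G)`. -/
noncomputable def qRad {V : Type*} [Fintype V] (G : SimpleGraph V) : ℝ :=
  letI := Classical.decEq V
  letI := Classical.decRel G.Adj
  sSup (spectrum ℝ (G.degMatrix ℝ + G.adjMatrix ℝ))

/-- The join of two graphs: their disjoint union together with all edges between them. -/
def graphJoin {α β : Type*} (G : SimpleGraph α) (H : SimpleGraph β) :
    SimpleGraph (α ⊕ β) := (Gᶜ ⊕g Hᶜ)ᶜ

/-- A graph is Hamilton-connected if every two distinct vertices are the
endpoints of a Hamiltonian path. -/
def IsHamConnected {V : Type*} [DecidableEq V] (G : SimpleGraph V) : Prop :=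
  ∀ u v : V, u ≠ v → ∃ p : G.Walk u v, p.IsHamiltonian

/-- A graph is traceable from every vertex if every vertex is an endpoint
of some Hamiltonian path. -/
def TraceableFromEveryVertex {V : Type*} [DecidableEq V] (G : SimpleGraph V) : Prop :=
  ∀ u : V, ∃ (v : V) (p : G.Walk u v), p.IsHamiltonian

/-- A graph is traceable if it contains a Hamiltonian path. -/
def IsTraceable {V : Type*} [DecidableEq V] (G : SimpleGraph V) : Prop :=
  ∃ (u v : V) (p : G.Walk u v), p.IsHamiltonian

section SpectralHelpers
open Matrix
set_option linter.unusedSectionVars false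
variable {m : Type*} [Fintype m] [DecidableEq m]

private lemma quad_expand' (A : Matrix m m ℝ) (x : m → ℝ) :
    x ⬝ᵥ A *ᵥ x = ∑ i, ∑ j, A i j * (x i * x j) := by
  simp only [dotProduct, Matrix.mulVec, dotProduct, Finset.mul_sum]
  exact Finset.sum_congr rfl fun i _ => Finset.sum_congr rfl fun j _ => by ring

private lemma eig_le_sSup' {A : Matrix m m ℝ} (hA : A.IsHermitian) (i : m) :
    hA.eigenvalues i ≤ sSup (spectrum ℝ A) :=
  le_csSup (Matrix.finite_spectrum A).bddAbove (hA.eigenvalues_mem_spectrum_real i)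

private lemma quad_le_sSup' [Nonempty m] {A : Matrix m m ℝ} (hA : A.IsHermitian)
    (x : m → ℝ) (hx : x ⬝ᵥ x = 1) : x ⬝ᵥ A *ᵥ x ≤ sSup (spectrum ℝ A) := by
  set U : Matrix m m ℝ := (hA.eigenvectorUnitary : Matrix m m ℝ) with hUdef
  have hUU : U * star U = 1 := Matrix.mem_unitaryGroup_iff.mp hA.eigenvectorUnitary.2
  have hsU : star U = Uᵀ := by
    ext i j; simp [Matrix.star_apply]
  set w : m → ℝ := star U *ᵥ x with hwdef
  have hw : w ⬝ᵥ w = 1 := by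
    rw [hwdef, dotProduct_mulVec, hsU, vecMul_transpose, mulVec_mulVec, ← hsU, hUU, one_mulVec,
      hx]
  have hquad : x ⬝ᵥ A *ᵥ x = ∑ i, hA.eigenvalues i * w i ^ 2 := by
    conv_lhs => rw [hA.spectral_theorem]
    rw [Unitary.conjStarAlgAut_apply]
    rw [← mulVec_mulVec, ← mulVec_mulVec, dotProduct_mulVec (A := U), hsU, ← mulVec_transpose,
      ← hsU, ← hwdef]
    simp only [mulVec_diagonal, dotProduct, Function.comp, RCLike.ofReal_real_eq_id, id_eq]
    exact Finset.sum_congr rfl fun i _ => by ring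
  rw [hquad]
  calc ∑ i, hA.eigenvalues i * w i ^ 2
      ≤ ∑ i, sSup (spectrum ℝ A) * w i ^ 2 := by
        refine Finset.sum_le_sum fun i _ => ?_
        exact mul_le_mul_of_nonneg_right (eig_le_sSup' hA i) (sq_nonneg _)
    _ = sSup (spectrum ℝ A) := by
        rw [← Finset.mul_sum]
        have : ∑ i, w i ^ 2 = 1 := by
          rw [← hw]; simp [dotProduct, sq]
        rw [this, mul_one]

private lemma exists_unit_eigvec' [Nonempty m] {A : Matrix m m ℝ} (hA : A.IsHermitian) :
    ∃ y : m → ℝ, y ⬝ᵥ y = 1 ∧ A *ᵥ y = sSup (spectrum ℝ A) • y := by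
  have hfin : (spectrum ℝ A).Finite := Matrix.finite_spectrum A
  have hne : (spectrum ℝ A).Nonempty := by
    rw [hA.spectrum_real_eq_range_eigenvalues]
    exact Set.range_nonempty _
  have hmem : sSup (spectrum ℝ A) ∈ spectrum ℝ A := hne.csSup_mem hfin
  rw [hA.spectrum_real_eq_range_eigenvalues] at hmem
  obtain ⟨j, hj⟩ := hmem
  refine ⟨⇑(hA.eigenvectorBasis j), ?_, ?_⟩
  · have h1 : ‖hA.eigenvectorBasis j‖ = 1 := hA.eigenvectorBasis.orthonormal.1 j
    have h2 : (inner ℝ (hA.eigenvectorBasis j) (hA.eigenvectorBasis j) : ℝ) = 1 := by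
      rw [real_inner_self_eq_norm_mul_norm, h1, mul_one]
    rw [PiLp.inner_apply] at h2
    simpa [dotProduct, sq] using h2
  · rw [hA.mulVec_eigenvectorBasis, ← hA.spectrum_real_eq_range_eigenvalues] at *
    rw [hj]
end SpectralHelpers

section JoinHelpers
open Matrix

lemma specRad_eq' {V : Type*} [Fintype V] [DecidableEq V] (G : SimpleGraph V)
    [DecidableRel G.Adj] : specRad G = sSup (spectrum ℝ (G.adjMatrix ℝ)) := by
  unfold specRad
  congr!

lemma adjMatrix_isHermitian' {V : Type*} [Fintype V] [DecidableEq V] (G : SimpleGraph V)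
    [DecidableRel G.Adj] : (G.adjMatrix ℝ).IsHermitian := by
  ext i j
  simp [Matrix.conjTranspose_apply, SimpleGraph.adjMatrix_apply, SimpleGraph.adj_comm]

lemma joinAdj_inl_inl {V : Type*} (G : SimpleGraph V) (u v : V) :
    (graphJoin G (⊤ : SimpleGraph (Fin 1))).Adj (.inl u) (.inl v) ↔ G.Adj u v := by
  simp only [graphJoin, compl_adj, SimpleGraph.sum_adj, ne_eq, Sum.inl.injEq]
  constructor
  · rintro ⟨h1, h2⟩
    by_contra h3
    exact h2 ⟨h1, h3⟩
  · intro h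
    exact ⟨G.ne_of_adj h, fun h2 => h2.2 h⟩

lemma joinAdj_inl_inr {V : Type*} (G : SimpleGraph V) (u : V) (i : Fin 1) :
    (graphJoin G (⊤ : SimpleGraph (Fin 1))).Adj (.inl u) (.inr i) := by
  simp [graphJoin, compl_adj, SimpleGraph.sum_adj]

lemma joinAdj_inr_inl {V : Type*} (G : SimpleGraph V) (u : V) (i : Fin 1) :
    (graphJoin G (⊤ : SimpleGraph (Fin 1))).Adj (.inr i) (.inl u) :=
  ((graphJoin G (⊤ : SimpleGraph (Fin 1))).adj_symm (joinAdj_inl_inr G u i))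

lemma joinAdj_inr_inr {V : Type*} (G : SimpleGraph V) (i j : Fin 1) :
    ¬ (graphJoin G (⊤ : SimpleGraph (Fin 1))).Adj (.inr i) (.inr j) := by
  simp [graphJoin, compl_adj, SimpleGraph.sum_adj, Subsingleton.elim i j]

set_option linter.unusedSectionVars false
variable {V : Type*} [Fintype V] [DecidableEq V] (G : SimpleGraph V) [DecidableRel G.Adj]
  [DecidableRel (graphJoin G (⊤ : SimpleGraph (Fin 1))).Adj]

lemma join_quad (z : V → ℝ) (a b : ℝ) :
    (Sum.elim (fun v => a * z v) (fun _ => b) : V ⊕ Fin 1 → ℝ) ⬝ᵥ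
        ((graphJoin G (⊤ : SimpleGraph (Fin 1))).adjMatrix ℝ) *ᵥ
        (Sum.elim (fun v => a * z v) (fun _ => b))
      = a ^ 2 * (z ⬝ᵥ (G.adjMatrix ℝ) *ᵥ z) + 2 * a * b * (∑ v, z v) := by
  rw [quad_expand', quad_expand']
  simp only [Fintype.sum_sum_type, Fin.sum_univ_one, Sum.elim_inl, Sum.elim_inr,
    adjMatrix_apply, joinAdj_inl_inl, joinAdj_inl_inr, joinAdj_inr_inl,
    if_true, joinAdj_inr_inr, if_false]
  rw [Finset.sum_add_distrib, Finset.mul_sum, Finset.mul_sum]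
  have h1 : ∀ u : V, ∑ v, (if G.Adj u v then (1:ℝ) else 0) * (a * z u * (a * z v))
      = a ^ 2 * ∑ v, (if G.Adj u v then (1:ℝ) else 0) * (z u * z v) := by
    intro u; rw [Finset.mul_sum]
    exact Finset.sum_congr rfl fun v _ => by split <;> ring
  simp only [h1]
  have h2 : ∑ x : V, (1:ℝ) * (a * z x * b) + (∑ x : V, (1:ℝ) * (b * (a * z x)) + 0 * (b * b))
      = ∑ i, 2 * a * b * z i := by
    rw [zero_mul, add_zero, ← Finset.sum_add_distrib]
    exact Finset.sum_congr rfl fun v _ => by ring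
  rw [add_assoc, h2]

lemma join_norm (z : V → ℝ) (a b : ℝ) :
    (Sum.elim (fun v => a * z v) (fun _ => b) : V ⊕ Fin 1 → ℝ) ⬝ᵥ
        (Sum.elim (fun v => a * z v) (fun _ => b))
      = a ^ 2 * (∑ v, z v ^ 2) + b ^ 2 := by
  simp only [dotProduct, Fintype.sum_sum_type, Fin.sum_univ_one, Sum.elim_inl, Sum.elim_inr]
  rw [Finset.mul_sum]
  congr 1
  · exact Finset.sum_congr rfl fun v _ => by ring
  · ring
end JoinHelpers


set_option maxHeartbeats 1600000 in
/-- For a graph `G` of order `n ≥ 2`,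
`μ(G ∨ K₁) > ((n−1)/n)·μ(G) + 2·√(n−1)/n`. -/
theorem stmt_0 {V : Type*} [Fintype V] (n : ℕ) (hn : 2 ≤ n)
    (hcard : Fintype.card V = n) (G : SimpleGraph V) :
    ((n : ℝ) - 1) / n * specRad G + 2 * Real.sqrt ((n : ℝ) - 1) / n <
      specRad (graphJoin G (⊤ : SimpleGraph (Fin 1))) := by
  classical
  open Matrix in
  have hn2 : (2 : ℝ) ≤ (n : ℝ) := by exact_mod_cast hn
  have hn0 : (0 : ℝ) < n := by linarith
  have hV : Nonempty V := by
    rw [← Fintype.card_pos_iff, hcard]; omega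
  have hNJ : Nonempty (V ⊕ Fin 1) := ⟨Sum.inr 0⟩
  set J := graphJoin G (⊤ : SimpleGraph (Fin 1)) with hJdef
  have hA : (G.adjMatrix ℝ).IsHermitian := adjMatrix_isHermitian' G
  have hB : (J.adjMatrix ℝ).IsHermitian := adjMatrix_isHermitian' J
  have hcard' : ∑ _v : V, (1 : ℝ) = n := by
    rw [Finset.sum_const, nsmul_eq_mul, mul_one, Finset.card_univ, hcard]
  rw [specRad_eq' J]
  set μ := specRad G with hμdef
  have hμ : μ = sSup (spectrum ℝ (G.adjMatrix ℝ)) := specRad_eq' G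
  rcases le_or_gt μ 0 with hle | hpos
  · -- case μ ≤ 0 : use the star
    set a := Real.sqrt ((2 * (n:ℝ))⁻¹) with hadef
    set b := Real.sqrt ((2:ℝ)⁻¹) with hbdef
    have ha2 : a ^ 2 = (2 * (n:ℝ))⁻¹ := Real.sq_sqrt (by positivity)
    have hb2 : b ^ 2 = (2:ℝ)⁻¹ := Real.sq_sqrt (by norm_num)
    set x : V ⊕ Fin 1 → ℝ := Sum.elim (fun v => a * 1) (fun _ => b) with hxdef
    have hxnorm : x ⬝ᵥ x = 1 := by
      rw [hxdef, join_norm (fun _ => (1:ℝ)) a b]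
      simp only [one_pow, hcard', ha2, hb2]
      field_simp
      ring
    have hquad : x ⬝ᵥ (J.adjMatrix ℝ) *ᵥ x
        = a ^ 2 * ((fun _ => (1:ℝ)) ⬝ᵥ (G.adjMatrix ℝ) *ᵥ (fun _ => (1:ℝ)))
          + 2 * a * b * (∑ _v : V, (1:ℝ)) := join_quad G (fun _ => 1) a b
    have hq0 : 0 ≤ (fun _ => (1:ℝ)) ⬝ᵥ (G.adjMatrix ℝ) *ᵥ (fun _ => (1:ℝ)) := by
      rw [quad_expand']
      refine Finset.sum_nonneg fun i _ => Finset.sum_nonneg fun j _ => ?_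
      simp only [adjMatrix_apply, mul_one]
      split <;> norm_num
    have hab : a * b = Real.sqrt ((4 * (n:ℝ))⁻¹) := by
      rw [hadef, hbdef, ← Real.sqrt_mul (by positivity)]
      ring_nf
    have hsq : Real.sqrt ((4 * (n:ℝ))⁻¹) = 1 / (2 * Real.sqrt n) := by
      rw [Real.sqrt_inv, Real.sqrt_mul (by norm_num), show (4:ℝ) = 2^2 by norm_num,
        Real.sqrt_sq (by norm_num), one_div]
    have hrpos : 0 < Real.sqrt n := Real.sqrt_pos.mpr hn0
    have hcross : 2 * a * b * (∑ _v : V, (1:ℝ)) = Real.sqrt n := by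
      rw [hcard', mul_assoc 2 a b, hab, hsq]
      rw [show (2:ℝ) * (1 / (2 * Real.sqrt n)) * n = n / Real.sqrt n by
        field_simp]
      exact Real.div_sqrt
    have hstep : Real.sqrt n ≤ sSup (spectrum ℝ (J.adjMatrix ℝ)) := by
      refine le_trans ?_ (quad_le_sSup' hB x hxnorm)
      rw [hquad, hcross]
      nlinarith [sq_nonneg a]
    have hrhs : ((n:ℝ) - 1) / n * μ + 2 * Real.sqrt ((n:ℝ) - 1) / n < Real.sqrt n := by
      have h1 : ((n:ℝ) - 1) / n * μ ≤ 0 :=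
        mul_nonpos_of_nonneg_of_nonpos (div_nonneg (by linarith) hn0.le) hle
      have ht : Real.sqrt ((n:ℝ) - 1) ^ 2 = (n:ℝ) - 1 := Real.sq_sqrt (by linarith)
      have ht0 : 0 ≤ Real.sqrt ((n:ℝ) - 1) := Real.sqrt_nonneg _
      have hr : Real.sqrt (n:ℝ) ^ 2 = (n:ℝ) := Real.sq_sqrt (by linarith)
      have hr1 : 1 < Real.sqrt (n:ℝ) := by nlinarith [Real.sqrt_nonneg (n:ℝ)]
      have h2 : 2 * Real.sqrt ((n:ℝ) - 1) / n ≤ 1 := by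
        rw [div_le_one hn0]
        nlinarith [sq_nonneg (Real.sqrt ((n:ℝ) - 1) - 1)]
      linarith
    exact lt_of_lt_of_le hrhs hstep
  · -- case μ > 0 : use perturbed Perron vector
    obtain ⟨y, hy1, hy2⟩ := exists_unit_eigvec' hA
    rw [← hμ] at hy2
    set z : V → ℝ := fun v => |y v| with hzdef
    have hzn : ∀ v, 0 ≤ z v := fun v => abs_nonneg _
    have hz2 : ∑ v, z v ^ 2 = 1 := by
      rw [show ∑ v, z v ^ 2 = y ⬝ᵥ y by
        simp only [dotProduct, hzdef, sq_abs]
        exact Finset.sum_congr rfl fun v _ => (sq (y v) ▸ by rw [sq]), hy1]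
    set q := z ⬝ᵥ (G.adjMatrix ℝ) *ᵥ z with hqdef
    have hyAy : y ⬝ᵥ (G.adjMatrix ℝ) *ᵥ y = μ := by
      rw [hy2, dotProduct_smul, hy1, smul_eq_mul, mul_one]
    have hq : μ ≤ q := by
      rw [← hyAy, hqdef, quad_expand', quad_expand']
      refine Finset.sum_le_sum fun i _ => Finset.sum_le_sum fun j _ => ?_
      have hnn : (0:ℝ) ≤ G.adjMatrix ℝ i j := by
        simp only [adjMatrix_apply]; split <;> norm_num
      refine mul_le_mul_of_nonneg_left ?_ hnn
      calc y i * y j ≤ |y i * y j| := le_abs_self _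
        _ = z i * z j := abs_mul _ _
    have hq0 : 0 < q := lt_of_lt_of_le hpos hq
    clear_value z
    -- find adjacent pair with positive z-values
    have hzuv : ∃ u v, u ≠ v ∧ 0 < z u ∧ 0 < z v := by
      have hex : ∃ i j, 0 < (G.adjMatrix ℝ) i j * (z i * z j) := by
        by_contra h
        push_neg at h
        have hq0' : q ≤ 0 := by
          rw [hqdef, quad_expand']
          exact Finset.sum_nonpos fun i _ => Finset.sum_nonpos fun j _ => h i j
        linarith
      obtain ⟨i, j, hij⟩ := hex
      have hadj : G.Adj i j := by
        by_contra hadj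
        simp [adjMatrix_apply, hadj] at hij
      have hprod : 0 < z i * z j := by
        simpa [adjMatrix_apply, hadj] using hij
      rcases mul_pos_iff.mp hprod with ⟨h1, h2⟩ | ⟨h1, h2⟩
      · exact ⟨i, j, G.ne_of_adj hadj, h1, h2⟩
      · exact absurd h1 (not_lt.mpr (hzn i))
    obtain ⟨u, v, huv, hzu, hzv⟩ := hzuv
    clear_value q
    have hzle1 : ∀ w, z w ≤ 1 := by
      intro w
      have h1 : z w ^ 2 ≤ 1 := by
        rw [← hz2]
        exact Finset.single_le_sum (fun i _ => sq_nonneg (z i)) (Finset.mem_univ w)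
      nlinarith [hzn w]
    have hpair : z u ^ 2 + z v ^ 2 ≤ 1 := by
      calc z u ^ 2 + z v ^ 2 = ∑ w ∈ {u, v}, z w ^ 2 := (Finset.sum_pair (f := fun w => z w ^ 2) huv).symm
        _ ≤ ∑ w, z w ^ 2 := Finset.sum_le_sum_of_subset_of_nonneg (Finset.subset_univ _)
            (fun i _ _ => sq_nonneg (z i))
        _ = 1 := hz2
    have hzu1 : z u < 1 := by
      rcases lt_or_eq_of_le (hzle1 u) with h | h
      · exact h
      · exfalso
        have h2 : 0 < z v ^ 2 := pow_pos hzv 2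
        have h3 : z u ^ 2 = 1 := by rw [h]; norm_num
        linarith
    have hs : 1 < ∑ w, z w := by
      have key : ∑ w, (z w - z w ^ 2) ≥ z u - z u ^ 2 :=
        Finset.single_le_sum (f := fun w => z w - z w ^ 2)
          (fun i _ => by
            show (0:ℝ) ≤ z i - z i ^ 2
            nlinarith [mul_nonneg (hzn i) (sub_nonneg.mpr (hzle1 i))]) (Finset.mem_univ u)
      have heq : ∑ w, (z w - z w ^ 2) = (∑ w, z w) - 1 := by
        rw [Finset.sum_sub_distrib, hz2]
      have h3 : 0 < z u * (1 - z u) := mul_pos hzu (by linarith)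
      have h4 : z u - z u ^ 2 = z u * (1 - z u) := by ring
      linarith
    -- the test vector
    set a := Real.sqrt (((n:ℝ) - 1) / n) with hadef
    set b := Real.sqrt ((n:ℝ)⁻¹) with hbdef
    have ha2 : a ^ 2 = ((n:ℝ) - 1) / n := Real.sq_sqrt (div_nonneg (by linarith) (by linarith))
    have hb2 : b ^ 2 = (n:ℝ)⁻¹ := Real.sq_sqrt (inv_nonneg.mpr hn0.le)
    have ha0 : 0 < a := Real.sqrt_pos.mpr (by
      apply div_pos <;> linarith)
    have hb0 : 0 < b := Real.sqrt_pos.mpr (inv_pos.mpr hn0)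
    have hab : a * b = Real.sqrt ((n:ℝ) - 1) / n := by
      rw [hadef, hbdef, ← Real.sqrt_mul (div_nonneg (by linarith) (by linarith)),
        show ((n:ℝ) - 1) / n * (n:ℝ)⁻¹ = ((n:ℝ) - 1) / (n:ℝ)^2 by ring,
        Real.sqrt_div (by linarith), Real.sqrt_sq (by linarith)]
    set x : V ⊕ Fin 1 → ℝ := Sum.elim (fun w => a * z w) (fun _ => b) with hxdef
    have hxnorm : x ⬝ᵥ x = 1 := by
      rw [hxdef, join_norm z a b, hz2, ha2, hb2]
      field_simp
      ring
    have hquad : x ⬝ᵥ (J.adjMatrix ℝ) *ᵥ x = a ^ 2 * q + 2 * a * b * (∑ w, z w) := by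
      rw [hxdef, hqdef, hJdef]
      exact join_quad G z a b
    have hfin : ((n:ℝ) - 1) / n * μ + 2 * Real.sqrt ((n:ℝ) - 1) / n
        < a ^ 2 * q + 2 * a * b * (∑ w, z w) := by
      have e1 : a ^ 2 * μ ≤ a ^ 2 * q := by nlinarith [sq_nonneg a]
      have e2 : 2 * a * b * 1 < 2 * a * b * (∑ w, z w) := by
        exact mul_lt_mul_of_pos_left hs
          (mul_pos (mul_pos (by norm_num : (0:ℝ) < 2) ha0) hb0)
      rw [ha2] at e1
      have : 2 * Real.sqrt ((n:ℝ) - 1) / n = 2 * (a * b) := by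
        rw [hab]; ring
      rw [this]
      calc ((n:ℝ) - 1) / n * μ + 2 * (a * b)
          ≤ a ^ 2 * q + 2 * a * b * 1 := by rw [ha2] at *; linarith [e1]
        _ < a ^ 2 * q + 2 * a * b * (∑ w, z w) := by linarith [e2]
    calc ((n:ℝ) - 1) / n * μ + 2 * Real.sqrt ((n:ℝ) - 1) / n
        < a ^ 2 * q + 2 * a * b * (∑ w, z w) := hfin
      _ = x ⬝ᵥ (J.adjMatrix ℝ) *ᵥ x := hquad.symm
      _ ≤ sSup (spectrum ℝ (J.adjMatrix ℝ)) := quad_le_sSup' hB x hxnorm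
end

section
/- Let k ≥ 2 and n ≥ 2k²+1, and let G be a graph of order n that is a subgraph of K₂ ∨ (K_{n−k−1} + K_{k−1}) with minimum degree δ(G) ≥ k. Then μ(G) < n − k, unless G = K₂ ∨ (K_{n−k−1} + K_{k−1}). -/
open SimpleGraph

open Finset in
lemma rowBound_spec' {n : Type*} [Fintype n] [DecidableEq n] [Nonempty n]
    (A : Matrix n n ℝ) (x : n → ℝ) (c : ℝ)
    (hx : ∀ i, 0 < x i) (hA : ∀ i j, 0 ≤ A i j)
    (hrow : ∀ i, ∑ j, A i j * x j ≤ c * x i) :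
    ∀ μ ∈ spectrum ℝ A, μ ≤ c := by
  intro μ hμ
  rw [spectrum.mem_iff] at hμ
  rw [Matrix.isUnit_iff_isUnit_det, isUnit_iff_ne_zero, not_not,
    ← Matrix.exists_mulVec_eq_zero_iff] at hμ
  obtain ⟨v, hv0, hv⟩ := hμ
  have hAv : A.mulVec v = μ • v := by
    have := hv
    rw [Matrix.sub_mulVec] at this
    have h1 : (algebraMap ℝ (Matrix n n ℝ) μ).mulVec v = μ • v := by
      rw [Matrix.algebraMap_eq_diagonal]
      ext j
      simp [Matrix.mulVec_diagonal, Pi.algebraMap_apply, Algebra.algebraMap_self_apply]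
    rw [h1, sub_eq_zero] at this
    exact this.symm
  obtain ⟨i, -, hi⟩ := Finset.exists_max_image Finset.univ (fun j => |v j| / x j)
    Finset.univ_nonempty
  have hvi : 0 < |v i| := by
    obtain ⟨j, hj⟩ : ∃ j, v j ≠ 0 := by
      by_contra h
      push_neg at h
      exact hv0 (funext h)
    have h1 : 0 < |v j| / x j := div_pos (abs_pos.mpr hj) (hx j)
    have h2 := hi j (Finset.mem_univ j)
    have := lt_of_lt_of_le h1 h2
    have := mul_pos this (hx i)
    calc (0:ℝ) < (|v i| / x i) * x i := by positivity
    _ = |v i| := div_mul_cancel₀ _ (hx i).ne'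
  have key : |μ| * |v i| ≤ c * |v i| := by
    have h1 : |μ| * |v i| = |(A.mulVec v) i| := by
      rw [hAv]; simp [abs_mul]
    have h2 : |(A.mulVec v) i| ≤ ∑ j, A i j * |v j| := by
      rw [Matrix.mulVec, dotProduct]
      refine (Finset.abs_sum_le_sum_abs _ _).trans ?_
      refine Finset.sum_le_sum fun j _ => ?_
      rw [abs_mul, abs_of_nonneg (hA i j)]
    have h3 : ∀ j, |v j| ≤ (|v i| / x i) * x j := by
      intro j
      have := hi j (Finset.mem_univ j)
      rw [div_le_div_iff₀ (hx j) (hx i)] at this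
      calc |v j| = |v j| / x j * x j := (div_mul_cancel₀ _ (hx j).ne').symm
      _ ≤ (|v i| / x i) * x j := by
          apply mul_le_mul_of_nonneg_right _ (hx j).le
          rw [div_le_div_iff₀ (hx j) (hx i)]; linarith
    have h4 : ∑ j, A i j * |v j| ≤ (|v i| / x i) * ∑ j, A i j * x j := by
      rw [Finset.mul_sum]
      refine Finset.sum_le_sum fun j _ => ?_
      calc A i j * |v j| ≤ A i j * ((|v i| / x i) * x j) :=
        mul_le_mul_of_nonneg_left (h3 j) (hA i j)
      _ = (|v i| / x i) * (A i j * x j) := by ring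
    have h5 : (|v i| / x i) * ∑ j, A i j * x j ≤ (|v i| / x i) * (c * x i) :=
      mul_le_mul_of_nonneg_left (hrow i) (div_nonneg hvi.le (hx i).le)
    have h6' : 0 < x i := hx i
    have h6 : (|v i| / x i) * (c * x i) = c * |v i| := by
      field_simp
    linarith [h1, h2, h3, h4, h5]
  have := le_of_mul_le_mul_right (by linarith [key] : |μ| * |v i| ≤ c * |v i|) hvi
  calc μ ≤ |μ| := le_abs_self μ
  _ ≤ c := by
      have := (mul_le_mul_iff_left₀ hvi).mp key
      exact this


set_option maxHeartbeats 1000000 in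
lemma arith_all (rk N t ε γ σ c : ℝ) (hk : 2 ≤ rk) (hN : 2*rk^2 - rk + 1 ≤ N)
    (ht : t * (2*(N - rk)) = 5)
    (hε : ε * N = (rk-1)*t)
    (hγ : γ * N = (rk-1)*t + 9/32)
    (hσ : σ * (8*N) = 1)
    (hc : c = N - σ) :
    0 < t ∧ 0 ≤ ε ∧ 0 < γ ∧ γ < 1 ∧ 0 < 1 + ε - γ ∧ (0:ℝ) ≤ c ∧ c < N ∧
    N + 2*ε - 2*γ ≤ c ∧
    (2*(1+ε) + (N-1) + (rk-1)*t) - 2*γ - (1+ε) ≤ c*(1+ε) ∧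
    (2*(1+ε) + (N-1) + (rk-1)*t) - 2 - (rk-1)*t ≤ c*(1-γ) ∧
    (2*(1+ε) + (N-1) + (rk-1)*t) - (1+ε) - 1 ≤ c*(1+ε-γ) ∧
    2*(1+ε) + (rk-1-1)*t ≤ c*t := by
  have hN7 : (7:ℝ) ≤ N := by nlinarith
  have hNpos : (0:ℝ) < N := by linarith
  have hD : 5*(rk-1) ≤ N - rk := by nlinarith
  have hD0 : (0:ℝ) < N - rk := by nlinarith
  have ht0 : 0 < t := by nlinarith
  have ht2 : t ≤ 1/2 := by nlinarith
  have hS0 : 0 ≤ (rk-1)*t := by nlinarith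
  have hS : (rk-1)*t ≤ 1/2 := by nlinarith
  have hσ0 : 0 < σ := by nlinarith
  have hσ56 : σ ≤ 1/56 := by nlinarith
  have hε0 : 0 ≤ ε := by nlinarith
  have hε14 : ε ≤ 1/14 := by nlinarith
  have hγ0 : 0 < γ := by nlinarith
  have hγ8 : γ ≤ 1/8 := by nlinarith
  have hc0 : (0:ℝ) ≤ c := by rw [hc]; linarith
  have hcN : c < N := by rw [hc]; linarith
  have e3 : σ*N = 1/8 := by linarith
  have e4 : σ*ε*N = ε/8 := by linear_combination ε * e3
  have e5 : σ*γ*N = γ/8 := by linear_combination γ * e3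
  have e6 : σ*t*N = t/8 := by linear_combination t * e3
  refine ⟨ht0, hε0, hγ0, by linarith, by linarith, hc0, hcN, ?_, ?_, ?_, ?_, ?_⟩
  · rw [hc, ← mul_le_mul_iff_right₀ hNpos]
    nlinarith [hε, hγ, e3]
  · rw [hc, ← mul_le_mul_iff_right₀ hNpos]
    nlinarith [hε, hγ, e3, e4, hε14, hσ0]
  · rw [hc, ← mul_le_mul_iff_right₀ hNpos]
    nlinarith [hε, hγ, e3, e5, hS, hε14, mul_pos hσ0 hγ0, hN7]
  · rw [hc, ← mul_le_mul_iff_right₀ hNpos]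
    nlinarith [hε, hγ, e3, e4, e5, hS, hε14, mul_pos hσ0 hγ0, hN7, mul_nonneg hσ0.le hε0]
  · rw [hc, ← mul_le_mul_iff_right₀ hNpos]
    nlinarith [hε, ht, e3, e6, hε14, ht0, ht2, hN7, mul_pos hσ0 ht0]



set_option maxHeartbeats 2000000 in
/-- If `k ≥ 2`, `n ≥ 2k²+1`, and `G` is a subgraph of
`K₂ ∨ (K_{n−k−1} + K_{k−1})` with minimum degree at least `k`, then
`μ(G) < n − k` unless `G = K₂ ∨ (K_{n−k−1} + K_{k−1})`. -/
theorem stmt_1 (k n : ℕ) (hk : 2 ≤ k) (hn : 2 * k ^ 2 + 1 ≤ n)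
    (G : SimpleGraph (Fin 2 ⊕ (Fin (n - k - 1) ⊕ Fin (k - 1))))
    (hsub : G ≤ graphJoin (⊤ : SimpleGraph (Fin 2))
        ((⊤ : SimpleGraph (Fin (n - k - 1))) ⊕g (⊤ : SimpleGraph (Fin (k - 1)))))
    (hδ : ∀ v, k ≤ (G.neighborSet v).ncard) :
    specRad G < (n : ℝ) - k ∨
      G = graphJoin (⊤ : SimpleGraph (Fin 2))
        ((⊤ : SimpleGraph (Fin (n - k - 1))) ⊕g (⊤ : SimpleGraph (Fin (k - 1)))) := by
  by_cases hGH : G = graphJoin (⊤ : SimpleGraph (Fin 2))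
        ((⊤ : SimpleGraph (Fin (n - k - 1))) ⊕g (⊤ : SimpleGraph (Fin (k - 1))))
  · exact Or.inr hGH
  left
  set H : SimpleGraph (Fin 2 ⊕ (Fin (n - k - 1) ⊕ Fin (k - 1))) :=
    graphJoin (⊤ : SimpleGraph (Fin 2))
        ((⊤ : SimpleGraph (Fin (n - k - 1))) ⊕g (⊤ : SimpleGraph (Fin (k - 1)))) with hHdef
  have hkn : k + 1 < n := by nlinarith
  have hK1 : 1 ≤ k - 1 := by omega
  -- C-vertices have all their H-edges in G
  have hHC : ∀ (c : Fin (k-1)) (u), H.Adj (.inr (.inr c)) u ↔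
      (∃ i : Fin 2, u = .inl i) ∨ (∃ d : Fin (k-1), d ≠ c ∧ u = .inr (.inr d)) := by
    intro c u
    rcases u with i | (w | d)
    · simp [hHdef, graphJoin, SimpleGraph.sum_adj]
    · simp [hHdef, graphJoin, SimpleGraph.sum_adj]
    · simp [hHdef, graphJoin, SimpleGraph.sum_adj, eq_comm (a := d), Sum.inr.injEq]
  have hC : ∀ (c : Fin (k-1)) (u), H.Adj (.inr (.inr c)) u → G.Adj (.inr (.inr c)) u := by
    classical
    intro c u hu
    have hsubset : G.neighborSet (.inr (.inr c)) ⊆ H.neighborSet (.inr (.inr c)) :=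
      fun z hz => hsub hz
    set Tf : Finset (Fin 2 ⊕ (Fin (n - k - 1) ⊕ Fin (k - 1))) :=
      insert (.inl 0) (insert (.inl 1)
        ((Finset.univ.erase c).image (fun d => (.inr (.inr d))))) with hTf
    have hTset : H.neighborSet (.inr (.inr c)) = ↑Tf := by
      ext u
      change H.Adj _ _ ↔ _
      rw [hHC c u]
      simp only [hTf, Finset.coe_insert, Set.mem_insert_iff, Finset.coe_image,
        Finset.coe_erase, Set.mem_image]
      constructor
      · rintro (⟨i, rfl⟩ | ⟨d, hd, rfl⟩)
        · fin_cases i <;> simp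
        · right; right; exact ⟨d, by simp [hd], rfl⟩
      · rintro (rfl | rfl | ⟨d, hd, rfl⟩)
        · exact Or.inl ⟨0, rfl⟩
        · exact Or.inl ⟨1, rfl⟩
        · simp only [Finset.coe_erase, Set.mem_diff, Set.mem_singleton_iff] at hd
          exact Or.inr ⟨d, hd.2, rfl⟩
    have hTcard : Tf.card ≤ k := by
      refine (Finset.card_insert_le _ _).trans ?_
      have := (Finset.card_insert_le (α := Fin 2 ⊕ (Fin (n - k - 1) ⊕ Fin (k - 1)))
        (.inl 1) ((Finset.univ.erase c).image (fun d => (.inr (.inr d)))))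
      have himg : ((Finset.univ.erase c).image
          (fun d : Fin (k-1) => (Sum.inr (Sum.inr d) : Fin 2 ⊕ (Fin (n - k - 1) ⊕ Fin (k - 1))))).card
          = (k-1) - 1 := by
        rw [Finset.card_image_of_injective _ (by intro a b hab; simpa using hab)]
        simp [Finset.card_erase_of_mem]
      omega
    have hncard : (H.neighborSet (.inr (.inr c))).ncard ≤ k := by
      rw [hTset, Set.ncard_coe_finset]; exact hTcard
    have heq : G.neighborSet (.inr (.inr c)) = H.neighborSet (.inr (.inr c)) := by
      exact Set.eq_of_subset_of_ncard_le hsubset (le_trans hncard (hδ _)) (Set.toFinite _)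
    have : u ∈ G.neighborSet (.inr (.inr c)) := by rw [heq]; exact hu
    exact this
  -- a missing edge, not incident to C
  have hmiss : ∃ p q, H.Adj p q ∧ ¬ G.Adj p q := by
    by_contra hno
    push_neg at hno
    exact hGH (le_antisymm hsub (fun {a b} hab => hno a b hab))
  obtain ⟨p, q, hpqH, hpqG⟩ := hmiss
  have hpq : p ≠ q := hpqH.ne
  have hpC : ∀ d : Fin (k-1), p ≠ .inr (.inr d) := by
    rintro d rfl
    exact hpqG (hC d q hpqH)
  have hqC : ∀ d : Fin (k-1), q ≠ .inr (.inr d) := by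
    rintro d rfl
    exact hpqG ((hC d p hpqH.symm).symm)
  -- real constants
  set N : ℝ := (n : ℝ) - k with hNdef
  have hrk2 : (2:ℝ) ≤ (k:ℝ) := by exact_mod_cast hk
  have hNlb : 2*(k:ℝ)^2 - (k:ℝ) + 1 ≤ N := by
    have : (2 * k ^ 2 + 1 : ℝ) ≤ (n : ℝ) := by exact_mod_cast hn
    simp only [hNdef]; nlinarith
  have hD0 : (0:ℝ) < N - (k:ℝ) := by nlinarith
  have hN0 : (0:ℝ) < N := by nlinarith
  set t : ℝ := 5 / (2*(N - (k:ℝ))) with htdef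
  set ε : ℝ := ((k:ℝ)-1)*t / N with hεdef
  set γ : ℝ := (((k:ℝ)-1)*t + 9/32) / N with hγdef
  set σ : ℝ := 1 / (8*N) with hσdef
  set c : ℝ := N - σ with hcdef
  have ht : t * (2*(N - (k:ℝ))) = 5 := by
    rw [htdef]; field_simp
  have hε : ε * N = ((k:ℝ)-1)*t := by rw [hεdef]; field_simp
  have hγ : γ * N = ((k:ℝ)-1)*t + 9/32 := by rw [hγdef]; field_simp
  have hσ : σ * (8*N) = 1 := by rw [hσdef]; field_simp
  obtain ⟨ht0, hε0, hγ0, hγ1, hεγ0, hc0, hcN, R1, R2, R3, R5, R7⟩ :=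
    arith_all (k:ℝ) N t ε γ σ c hrk2 hNlb ht hε hγ hσ hcdef
  -- cast facts
  have hN'cast : ((n - k - 1 : ℕ) : ℝ) = N - 1 := by
    have e1 : n - k - 1 = n - (k+1) := by omega
    rw [hNdef, e1, Nat.cast_sub (by omega : k + 1 ≤ n)]
    push_cast
    ring
  have hK'cast : ((k - 1 : ℕ) : ℝ) = (k:ℝ) - 1 := by
    rw [Nat.cast_sub (by omega : 1 ≤ k)]
    push_cast
    ring
  -- weights
  classical
  set base : Fin 2 ⊕ (Fin (n-k-1) ⊕ Fin (k-1)) → ℝ :=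
    Sum.elim (fun _ => 1+ε) (Sum.elim (fun _ => 1) (fun _ => t)) with hbasedef
  set x : Fin 2 ⊕ (Fin (n-k-1) ⊕ Fin (k-1)) → ℝ :=
    fun j => base j - (if j = p then γ else 0) - (if j = q then γ else 0) with hxdef
  have hbase_pos : ∀ j, 0 < base j := by
    rintro (s | (w | d)) <;> simp [hbasedef] <;> linarith
  have hbase_ge1 : ∀ j, (∀ d : Fin (k-1), j ≠ .inr (.inr d)) → 1 ≤ base j := by
    rintro (s | (w | d)) hj
    · simp [hbasedef]; linarith
    · simp [hbasedef]
    · exact absurd rfl (hj d)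
  have hx_le_base : ∀ j, x j ≤ base j := by
    intro j
    simp only [hxdef]
    have h1 : (0:ℝ) ≤ (if j = p then γ else 0) := by positivity
    have h2 : (0:ℝ) ≤ (if j = q then γ else 0) := by positivity
    linarith
  have hx_notpq : ∀ j, j ≠ p → j ≠ q → x j = base j := by
    intro j h1 h2; simp [hxdef, h1, h2]
  have hxp : x p = base p - γ := by simp [hxdef, hpq]
  have hxq : x q = base q - γ := by simp [hxdef, hpq.symm]
  have hx_pos : ∀ j, 0 < x j := by
    intro j
    by_cases h1 : j = p
    · subst h1; rw [hxp]
      have := hbase_ge1 j (hpC)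
      linarith
    by_cases h2 : j = q
    · subst h2; rw [hxq]
      have := hbase_ge1 j (hqC)
      linarith
    · rw [hx_notpq j h1 h2]; exact hbase_pos j
  have hxC : ∀ d : Fin (k-1), x (.inr (.inr d)) = t := by
    intro d
    rw [hx_notpq _ (fun h => hpC d h.symm) (fun h => hqC d h.symm)]
    simp [hbasedef]
  -- sums
  have hsum_base : ∑ j, base j = 2*(1+ε) + (N - 1) + ((k:ℝ)-1)*t := by
    rw [Fintype.sum_sum_type, Fintype.sum_sum_type]
    simp only [hbasedef, Sum.elim_inl, Sum.elim_inr]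
    rw [Finset.sum_const, Finset.sum_const, Finset.sum_const]
    simp only [Finset.card_univ, Fintype.card_fin, nsmul_eq_mul]
    rw [← hN'cast, ← hK'cast]
    push_cast
    ring
  have hsum_x : ∑ j, x j = 2*(1+ε) + (N - 1) + ((k:ℝ)-1)*t - 2*γ := by
    simp only [hxdef]
    rw [Finset.sum_sub_distrib, Finset.sum_sub_distrib]
    rw [Finset.sum_ite_eq' Finset.univ p (fun _ => γ),
        Finset.sum_ite_eq' Finset.univ q (fun _ => γ)]
    simp [hsum_base]
    ring
  set Cset : Finset (Fin 2 ⊕ (Fin (n-k-1) ⊕ Fin (k-1))) :=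
    Finset.univ.image (fun d : Fin (k-1) => .inr (.inr d)) with hCsetdef
  have hCinj : Function.Injective (fun d : Fin (k-1) =>
      (Sum.inr (Sum.inr d) : Fin 2 ⊕ (Fin (n-k-1) ⊕ Fin (k-1)))) := by
    intro a b hab; simpa using hab
  have hmemC : ∀ j, j ∈ Cset ↔ ∃ d : Fin (k-1), j = .inr (.inr d) := by
    intro j
    simp only [hCsetdef, Finset.mem_image, Finset.mem_univ, true_and]
    constructor
    · rintro ⟨d, rfl⟩; exact ⟨d, rfl⟩
    · rintro ⟨d, rfl⟩; exact ⟨d, rfl⟩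
  have hsum_Cx : ∑ j ∈ Cset, x j = ((k:ℝ)-1) * t := by
    rw [hCsetdef, Finset.sum_image (fun a _ b _ h => hCinj h)]
    rw [Finset.sum_congr rfl (fun d _ => hxC d)]
    rw [Finset.sum_const]
    simp only [Finset.card_univ, Fintype.card_fin, nsmul_eq_mul]
    rw [hK'cast]
  -- row bound helper
  letI : DecidableRel G.Adj := Classical.decRel _
  have hrowle : ∀ (i) (S : Finset (Fin 2 ⊕ (Fin (n-k-1) ⊕ Fin (k-1)))),
      (∀ j, G.Adj i j → j ∈ S) →
      ∑ j, (G.adjMatrix ℝ) i j * x j ≤ ∑ j ∈ S, x j := by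
    intro i S hS
    have h1 : ∀ j, (G.adjMatrix ℝ) i j * x j = (if G.Adj i j then x j else 0) := by
      intro j
      rw [SimpleGraph.adjMatrix_apply]
      by_cases h : G.Adj i j <;> simp [h]
    calc ∑ j, (G.adjMatrix ℝ) i j * x j = ∑ j, (if G.Adj i j then x j else 0) := by
          exact Finset.sum_congr rfl (fun j _ => h1 j)
    _ ≤ ∑ j, (if j ∈ S then x j else 0) := by
          refine Finset.sum_le_sum (fun j _ => ?_)
          by_cases h : G.Adj i j
          · simp [h, hS j h]
          · simp only [h, if_false]
            by_cases h2 : j ∈ S <;> simp [h2, (hx_pos j).le]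
    _ = ∑ j ∈ S, x j := by rw [Finset.sum_ite_mem, Finset.univ_inter]
  
  have hHW' : ∀ (w : Fin (n-k-1)) (d : Fin (k-1)), ¬ H.Adj (.inr (.inl w)) (.inr (.inr d)) := by
    intro w d
    simp [hHdef, graphJoin, SimpleGraph.sum_adj]
  have hsum_Cbase : ∑ j ∈ Cset, base j = ((k:ℝ)-1) * t := by
    rw [hCsetdef, Finset.sum_image (fun a _ b _ h => hCinj h)]
    simp only [hbasedef, Sum.elim_inr]
    rw [Finset.sum_const]
    simp only [Finset.card_univ, Fintype.card_fin, nsmul_eq_mul]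
    rw [hK'cast]
  have hrow : ∀ i, ∑ j, (G.adjMatrix ℝ) i j * x j ≤ c * x i := by
    intro i
    by_cases hie : i = p ∨ i = q
    · -- endpoint cases
      have hxi : x i = base i - γ := by rcases hie with rfl | rfl; exacts [hxp, hxq]
      have hbpq : base i + 1 ≤ base p + base q := by
        rcases hie with rfl | rfl
        · have := hbase_ge1 q hqC; linarith
        · have := hbase_ge1 p hpC; linarith
      have hqmem : q ∈ Finset.univ.erase p :=
        Finset.mem_erase.mpr ⟨hpq.symm, Finset.mem_univ q⟩
      have hsum2 : ∑ j ∈ (Finset.univ.erase p).erase q, x j = (∑ j, x j) - x p - x q := by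
        rw [Finset.sum_erase_eq_sub hqmem, Finset.sum_erase_eq_sub (Finset.mem_univ p)]
      have hnotp : ∀ j, G.Adj i j → j ≠ p := by
        intro j hj hjp
        subst hjp
        rcases hie with rfl | rfl
        · exact G.irrefl hj
        · exact hpqG hj.symm
      have hnotq : ∀ j, G.Adj i j → j ≠ q := by
        intro j hj hjq
        subst hjq
        rcases hie with rfl | rfl
        · exact hpqG hj
        · exact G.irrefl hj
      have hle := hrowle i ((Finset.univ.erase p).erase q)
        (fun j hj => Finset.mem_erase.mpr ⟨hnotq j hj,
          Finset.mem_erase.mpr ⟨hnotp j hj, Finset.mem_univ j⟩⟩)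
      rw [hsum2, hsum_x, hxp, hxq] at hle
      rcases i with s | (w | d)
      · have hb : base (.inl s :  Fin 2 ⊕ (Fin (n-k-1) ⊕ Fin (k-1))) = 1 + ε := rfl
        rw [hb] at hbpq
        rw [hxi, hb]
        linarith [R5, hbpq, hle]
      · have hb : base (.inr (.inl w) :  Fin 2 ⊕ (Fin (n-k-1) ⊕ Fin (k-1))) = 1 := rfl
        rw [hb] at hbpq
        -- this vertex has no C neighbours, sharpen
        have hle2 := hrowle (.inr (.inl w)) (((Finset.univ.erase p).erase q) \ Cset)
          (fun j hj => Finset.mem_sdiff.mpr ⟨Finset.mem_erase.mpr ⟨hnotq j hj,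
            Finset.mem_erase.mpr ⟨hnotp j hj, Finset.mem_univ j⟩⟩, by
              intro hjC
              obtain ⟨d, rfl⟩ := (hmemC j).mp hjC
              exact hHW' w d (hsub hj)⟩)
        have hCsub : Cset ⊆ (Finset.univ.erase p).erase q := by
          intro j hjC
          obtain ⟨d, rfl⟩ := (hmemC j).mp hjC
          refine Finset.mem_erase.mpr ⟨?_, Finset.mem_erase.mpr ⟨?_, Finset.mem_univ _⟩⟩
          · exact fun h => hqC d h.symm
          · exact fun h => hpC d h.symm
        rw [Finset.sum_sdiff_eq_sub hCsub, hsum_Cx, hsum2, hsum_x, hxp, hxq] at hle2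
        rw [hxi, hb]
        linarith [R3, hbpq, hle2]
      · exact absurd hie (by
          push_neg
          exact ⟨fun h => hpC d h.symm, fun h => hqC d h.symm⟩)
    · push_neg at hie
      obtain ⟨hip, hiq⟩ := hie
      have hxi : x i = base i := hx_notpq i hip hiq
      rcases i with s | (w | d)
      · have hle := hrowle (.inl s) (Finset.univ.erase (.inl s))
          (fun j hj => Finset.mem_erase.mpr ⟨(G.ne_of_adj hj).symm, Finset.mem_univ j⟩)
        rw [Finset.sum_erase_eq_sub (Finset.mem_univ _), hsum_x, hxi] at hle
        have hb : base (.inl s :  Fin 2 ⊕ (Fin (n-k-1) ⊕ Fin (k-1))) = 1 + ε := rfl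
        rw [hxi, hb]
        rw [hb] at hle
        linarith [R2, hle]
      · have hCsub : Cset ⊆ Finset.univ.erase (.inr (.inl w)) := by
          intro j hjC
          obtain ⟨d, rfl⟩ := (hmemC j).mp hjC
          exact Finset.mem_erase.mpr ⟨by simp, Finset.mem_univ _⟩
        have hle := hrowle (.inr (.inl w)) ((Finset.univ.erase (.inr (.inl w))) \ Cset)
          (fun j hj => Finset.mem_sdiff.mpr ⟨Finset.mem_erase.mpr
            ⟨(G.ne_of_adj hj).symm, Finset.mem_univ j⟩, by
              intro hjC
              obtain ⟨d, rfl⟩ := (hmemC j).mp hjC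
              exact hHW' w d (hsub hj)⟩)
        rw [Finset.sum_sdiff_eq_sub hCsub, hsum_Cx,
          Finset.sum_erase_eq_sub (Finset.mem_univ _), hsum_x, hxi] at hle
        have hb : base (.inr (.inl w) :  Fin 2 ⊕ (Fin (n-k-1) ⊕ Fin (k-1))) = 1 := rfl
        rw [hxi, hb]
        rw [hb] at hle
        linarith [R1, hle]
      · -- C vertex
        have hiC : (Sum.inr (Sum.inr d) :  Fin 2 ⊕ (Fin (n-k-1) ⊕ Fin (k-1))) ∈ Cset :=
          (hmemC _).mpr ⟨d, rfl⟩
        set S5 : Finset (Fin 2 ⊕ (Fin (n-k-1) ⊕ Fin (k-1))) :=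
          insert (.inl 0) (insert (.inl 1) (Cset.erase (.inr (.inr d)))) with hS5def
        have hle := hrowle (.inr (.inr d)) S5 (fun j hj => by
          have hHj := hsub hj
          rcases (hHC d j).mp hHj with ⟨i2, rfl⟩ | ⟨d', hd', rfl⟩
          · fin_cases i2
            · exact Finset.mem_insert_self _ _
            · exact Finset.mem_insert.mpr (Or.inr (Finset.mem_insert_self _ _))
          · refine Finset.mem_insert.mpr (Or.inr (Finset.mem_insert.mpr (Or.inr ?_)))
            exact Finset.mem_erase.mpr ⟨by simpa using hd', (hmemC _).mpr ⟨d', rfl⟩⟩)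
        have hxb : ∑ j ∈ S5, x j ≤ ∑ j ∈ S5, base j :=
          Finset.sum_le_sum (fun j _ => hx_le_base j)
        have h0 : (Sum.inl 0 :  Fin 2 ⊕ (Fin (n-k-1) ⊕ Fin (k-1))) ∉
            insert (.inl 1) (Cset.erase (.inr (.inr d))) := by
          intro hmem
          rcases Finset.mem_insert.mp hmem with h | h
          · simp [Fin.ext_iff] at h
          · obtain ⟨d', hd⟩ := (hmemC _).mp (Finset.mem_of_mem_erase h)
            simp at hd
        have h1 : (Sum.inl 1 :  Fin 2 ⊕ (Fin (n-k-1) ⊕ Fin (k-1))) ∉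
            Cset.erase (.inr (.inr d)) := by
          intro hmem
          obtain ⟨d', hd⟩ := (hmemC _).mp (Finset.mem_of_mem_erase hmem)
          simp at hd
        have hsum5 : ∑ j ∈ S5, base j = 2*(1+ε) + (((k:ℝ)-1)*t - t) := by
          rw [hS5def, Finset.sum_insert h0, Finset.sum_insert h1,
            Finset.sum_erase_eq_sub hiC, hsum_Cbase]
          have hb0 : base (.inl 0 :  Fin 2 ⊕ (Fin (n-k-1) ⊕ Fin (k-1))) = 1 + ε := rfl
          have hb1 : base (.inl 1 :  Fin 2 ⊕ (Fin (n-k-1) ⊕ Fin (k-1))) = 1 + ε := rfl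
          have hbd : base (.inr (.inr d) :  Fin 2 ⊕ (Fin (n-k-1) ⊕ Fin (k-1))) = t := rfl
          rw [hb0, hb1, hbd]
          ring
        rw [hxC d]
        calc ∑ j, (G.adjMatrix ℝ) (.inr (.inr d)) j * x j ≤ ∑ j ∈ S5, x j := hle
        _ ≤ ∑ j ∈ S5, base j := hxb
        _ = 2*(1+ε) + (((k:ℝ)-1)*t - t) := hsum5
        _ ≤ c * t := by linarith [R7]
  -- final assembly
  haveI : Nonempty (Fin 2 ⊕ (Fin (n-k-1) ⊕ Fin (k-1))) := ⟨.inl 0⟩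
  have hAnn : ∀ i j, (0:ℝ) ≤ (G.adjMatrix ℝ) i j := by
    intro i j
    rw [SimpleGraph.adjMatrix_apply]
    by_cases h : G.Adj i j <;> simp [h]
  have : specRad G ≤ c := by
    unfold specRad
    exact Real.sSup_le (fun μ hμ =>
      @rowBound_spec' _ _ (Classical.decEq _) ⟨Sum.inl 0⟩
        (G.adjMatrix ℝ) x c hx_pos hAnn hrow μ hμ) hc0
  linarith [hcN]
end

section
/- Let G be a bipartite graph with parts X and Y, and let n = max{|X|, |Y|}. Then q(G) ≤ e(G)/n + n. -/
open SimpleGraph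

section Aux

open Module.End Matrix Finset

/-- From a real spectrum element of a matrix, produce an eigenvector. -/
lemma spec_mem_exists_eigenvector {V : Type*} [Fintype V] [DecidableEq V]
    {M : Matrix V V ℝ} {μ : ℝ} (h : μ ∈ spectrum ℝ M) :
    ∃ x : V → ℝ, x ≠ 0 ∧ M *ᵥ x = μ • x := by
  rw [← AlgEquiv.spectrum_eq (Matrix.toLinAlgEquiv' (R := ℝ) (n := V)) M] at h
  have h' : Module.End.HasEigenvalue (Matrix.toLinAlgEquiv' M) μ :=
    Module.End.hasEigenvalue_iff_mem_spectrum.mpr h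
  obtain ⟨x, hx⟩ := h'.exists_hasEigenvector
  refine ⟨x, hx.2, ?_⟩
  have := hx.apply_eq_smul
  simpa [Matrix.toLinAlgEquiv'_apply] using this

/-- Key spectral bound: if all degrees are at most `n` and all neighborhood degree
sums are at most `e`, then every signless-Laplacian eigenvalue is at most `e/n + n`. -/
lemma key_bound {V : Type*} [Fintype V] [DecidableEq V] (G : SimpleGraph V)
    [DecidableRel G.Adj] (e n μ : ℝ) (hn0 : 0 ≤ n) (he0 : 0 ≤ e)
    (hdeg : ∀ v, (G.degree v : ℝ) ≤ n)
    (hS : ∀ v, (∑ w ∈ G.neighborFinset v, (G.degree w : ℝ)) ≤ e)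
    (hμ : μ ∈ spectrum ℝ (G.degMatrix ℝ + G.adjMatrix ℝ)) :
    μ ≤ e / n + n := by
  have hb0 : 0 ≤ e / n + n := add_nonneg (div_nonneg he0 hn0) hn0
  rcases le_or_gt μ 0 with hneg | hμpos
  · linarith
  obtain ⟨x, hx0, hxe⟩ := spec_mem_exists_eigenvector hμ
  set y : V → ℝ := fun v => |x v| with hy
  have hy0 : ∀ v, 0 ≤ y v := fun v => abs_nonneg _
  have hQy : ∀ v, μ * y v ≤ (G.degree v : ℝ) * y v + ∑ w ∈ G.neighborFinset v, y w := by
    intro v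
    have h1 : (G.degree v : ℝ) * x v + ∑ w ∈ G.neighborFinset v, x w = μ * x v := by
      have h2 := congrFun hxe v
      rw [Matrix.add_mulVec, Pi.add_apply, SimpleGraph.degMatrix_mulVec_apply,
        SimpleGraph.adjMatrix_mulVec_apply] at h2
      simpa using h2
    calc μ * y v = |μ * x v| := by rw [abs_mul, abs_of_pos hμpos]
    _ = |(G.degree v : ℝ) * x v + ∑ w ∈ G.neighborFinset v, x w| := by rw [h1]
    _ ≤ |(G.degree v : ℝ) * x v| + |∑ w ∈ G.neighborFinset v, x w| := abs_add_le _ _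
    _ ≤ (G.degree v : ℝ) * y v + ∑ w ∈ G.neighborFinset v, y w := by
        refine add_le_add (le_of_eq ?_) (Finset.abs_sum_le_sum_abs _ _)
        rw [abs_mul, abs_of_nonneg (Nat.cast_nonneg _)]
  obtain ⟨v₁, hv₁⟩ : ∃ v, 0 < y v := by
    by_contra hcon
    push_neg at hcon
    refine hx0 (funext fun v => ?_)
    have := le_antisymm (hcon v) (hy0 v)
    simpa [hy, abs_eq_zero] using this
  have hv₁d : 0 < G.degree v₁ := by
    by_contra hd
    push_neg at hd
    have hd0 : G.degree v₁ = 0 := Nat.le_zero.mp hd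
    have hemp : G.neighborFinset v₁ = ∅ := Finset.card_eq_zero.mp hd0
    have h3 := hQy v₁
    rw [hd0, hemp] at h3
    simp at h3
    nlinarith [mul_pos hμpos hv₁]
  set T : Finset V := Finset.univ.filter (fun v => 0 < G.degree v) with hT
  obtain ⟨u, huT, hmax⟩ := T.exists_max_image (fun v => y v / (G.degree v : ℝ))
    ⟨v₁, by simp [hT, hv₁d]⟩
  have hud : 0 < G.degree u := (Finset.mem_filter.mp huT).2
  have hdu : (0:ℝ) < (G.degree u : ℝ) := by exact_mod_cast hud
  have hyu : 0 < y u := by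
    have h4 := hmax v₁ (by simp [hT, hv₁d])
    have h5 : 0 < y v₁ / (G.degree v₁ : ℝ) := div_pos hv₁ (by exact_mod_cast hv₁d)
    have h6 : 0 < y u / (G.degree u : ℝ) := lt_of_lt_of_le h5 h4
    rcases div_pos_iff.mp h6 with ⟨h, _⟩ | ⟨_, h⟩
    · exact h
    · linarith
  set d : ℝ := (G.degree u : ℝ) with hd
  set S : ℝ := ∑ w ∈ G.neighborFinset u, (G.degree w : ℝ) with hSdef
  have hsum : ∑ w ∈ G.neighborFinset u, y w ≤ (y u / d) * S := by
    rw [hSdef, Finset.mul_sum]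
    refine Finset.sum_le_sum (fun w hw => ?_)
    have hadj : G.Adj u w := (SimpleGraph.mem_neighborFinset _ _ _).mp hw
    have hwd : 0 < G.degree w := (G.degree_pos_iff_exists_adj w).mpr ⟨u, hadj.symm⟩
    have h7 := hmax w (by simp [hT, hwd])
    have hwd' : (0:ℝ) < (G.degree w : ℝ) := by exact_mod_cast hwd
    rw [div_le_div_iff₀ hwd' hdu] at h7
    rw [div_mul_eq_mul_div, le_div_iff₀ hdu]
    linarith
  have hmu_le : μ ≤ d + S / d := by
    have h3 : μ * y u ≤ (d + S / d) * y u := by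
      have h8 : d * y u + (y u / d) * S = (d + S / d) * y u := by
        field_simp
      have := hQy u
      nlinarith [hsum]
    exact le_of_mul_le_mul_right h3 hyu
  have hd1 : (1:ℝ) ≤ d := by rw [hd]; exact_mod_cast hud
  have hdn : d ≤ n := hdeg u
  have hn1 : (0:ℝ) < n := lt_of_lt_of_le hdu hdn
  have hSe : S ≤ e := hS u
  have hS0 : 0 ≤ S := Finset.sum_nonneg (fun w _ => Nat.cast_nonneg _)
  have hSdn : S ≤ d * n := by
    calc S ≤ ∑ _w ∈ G.neighborFinset u, n := Finset.sum_le_sum (fun w _ => hdeg w)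
    _ = d * n := by
        rw [Finset.sum_const, nsmul_eq_mul]
        congr 1
  rcases le_total (d * n) e with hc | hc
  · have h5 : S / d ≤ n := (div_le_iff₀ hdu).mpr (by nlinarith)
    have h6 : d ≤ e / n := (le_div_iff₀ hn1).mpr hc
    linarith
  · have h5 : S / d ≤ e / d := by gcongr
    have h7 : d + e / d ≤ e / n + n := by
      have h8 : (e / n + n) - (d + e / d) = (n - d) * (d * n - e) / (d * n) := by
        field_simp
        ring
      have h9 : 0 ≤ (n - d) * (d * n - e) / (d * n) :=
        div_nonneg (mul_nonneg (by linarith) (by linarith)) (by positivity)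
      linarith
    linarith

end Aux

/-- For a bipartite graph `G` with parts `X`, `Y` and
`n = max(|X|, |Y|)`, one has `q(G) ≤ e(G)/n + n`. -/
theorem stmt_7 {α β : Type*} [Fintype α] [Fintype β] (G : SimpleGraph (α ⊕ β))
    (hX : ∀ a b, ¬ G.Adj (Sum.inl a) (Sum.inl b))
    (hY : ∀ a b, ¬ G.Adj (Sum.inr a) (Sum.inr b)) :
    qRad G ≤ (G.edgeSet.ncard : ℝ) / (max (Fintype.card α) (Fintype.card β) : ℕ) +
      (max (Fintype.card α) (Fintype.card β) : ℕ) := by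
  letI : DecidableEq (α ⊕ β) := Classical.decEq _
  letI : DecidableRel G.Adj := Classical.decRel _
  have hshow : qRad G = sSup (spectrum ℝ (G.degMatrix ℝ + G.adjMatrix ℝ)) := rfl
  rw [hshow]
  set N : ℕ := max (Fintype.card α) (Fintype.card β) with hN
  have hnl : ∀ a : α, G.neighborFinset (Sum.inl a)
      = (Finset.univ.filter (fun b => G.Adj (Sum.inl a) (Sum.inr b))).image Sum.inr := by
    intro a; ext w
    cases w with
    | inl c => simp [hX a c]
    | inr b => simp
  have hnr : ∀ b : β, G.neighborFinset (Sum.inr b)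
      = (Finset.univ.filter (fun a => G.Adj (Sum.inr b) (Sum.inl a))).image Sum.inl := by
    intro b; ext w
    cases w with
    | inl a => simp
    | inr c => simp [hY b c]
  have hdl : ∀ a : α, G.degree (Sum.inl a)
      = (Finset.univ.filter (fun b => G.Adj (Sum.inl a) (Sum.inr b))).card := by
    intro a
    rw [SimpleGraph.degree, hnl a, Finset.card_image_of_injective _ Sum.inr_injective]
  have hdr : ∀ b : β, G.degree (Sum.inr b)
      = (Finset.univ.filter (fun a => G.Adj (Sum.inr b) (Sum.inl a))).card := by
    intro b
    rw [SimpleGraph.degree, hnr b, Finset.card_image_of_injective _ Sum.inl_injective]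
  have hdegl : ∀ a : α, G.degree (Sum.inl a) ≤ Fintype.card β := by
    intro a
    rw [hdl a, ← Finset.card_univ]
    exact Finset.card_filter_le _ _
  have hdegr : ∀ b : β, G.degree (Sum.inr b) ≤ Fintype.card α := by
    intro b
    rw [hdr b, ← Finset.card_univ]
    exact Finset.card_filter_le _ _
  have hcross : ∑ a : α, G.degree (Sum.inl a) = ∑ b : β, G.degree (Sum.inr b) := by
    simp_rw [hdl, hdr, Finset.card_filter]
    rw [Finset.sum_comm]
    refine Finset.sum_congr rfl fun b _ => Finset.sum_congr rfl fun a _ => ?_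
    congr 1
    exact propext (G.adj_comm _ _)
  have htot := G.sum_degrees_eq_twice_card_edges
  rw [Fintype.sum_sum_type] at htot
  have hEr : ∑ b : β, G.degree (Sum.inr b) = G.edgeFinset.card := by omega
  have hEl : ∑ a : α, G.degree (Sum.inl a) = G.edgeFinset.card := by omega
  have hEcard : G.edgeSet.ncard = G.edgeFinset.card := by
    rw [Set.ncard_eq_toFinset_card']
    congr 1
  have hdeg : ∀ v, (G.degree v : ℝ) ≤ (N : ℝ) := by
    intro v
    cases v with
    | inl a => exact_mod_cast le_trans (hdegl a) (le_max_right _ _)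
    | inr b => exact_mod_cast le_trans (hdegr b) (le_max_left _ _)
  have hS : ∀ v, (∑ w ∈ G.neighborFinset v, (G.degree w : ℝ)) ≤ (G.edgeSet.ncard : ℝ) := by
    intro v
    cases v with
    | inl a =>
        rw [hnl a, Finset.sum_image (fun x _ y _ h => Sum.inr_injective h)]
        calc (∑ b ∈ Finset.univ.filter (fun b => G.Adj (Sum.inl a) (Sum.inr b)),
              (G.degree (Sum.inr b) : ℝ))
            ≤ ∑ b : β, (G.degree (Sum.inr b) : ℝ) :=
              Finset.sum_le_sum_of_subset_of_nonneg (Finset.filter_subset _ _)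
                (fun _ _ _ => Nat.cast_nonneg _)
          _ = ((∑ b : β, G.degree (Sum.inr b) : ℕ) : ℝ) := by push_cast; rfl
          _ = (G.edgeSet.ncard : ℝ) := by rw [hEr, hEcard]
    | inr b =>
        rw [hnr b, Finset.sum_image (fun x _ y _ h => Sum.inl_injective h)]
        calc (∑ a ∈ Finset.univ.filter (fun a => G.Adj (Sum.inr b) (Sum.inl a)),
              (G.degree (Sum.inl a) : ℝ))
            ≤ ∑ a : α, (G.degree (Sum.inl a) : ℝ) :=
              Finset.sum_le_sum_of_subset_of_nonneg (Finset.filter_subset _ _)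
                (fun _ _ _ => Nat.cast_nonneg _)
          _ = ((∑ a : α, G.degree (Sum.inl a) : ℕ) : ℝ) := by push_cast; rfl
          _ = (G.edgeSet.ncard : ℝ) := by rw [hEl, hEcard]
  exact Real.sSup_le
    (fun μ hμ => key_bound G _ _ μ (by positivity) (by positivity) hdeg hS hμ)
    (by positivity)
end

section
/- Let k ≥ 1 and n ≥ k³/2 + k + 2, and let G be a subgraph of C_n^k with minimum degree δ(G) ≥ k. Then μ(G) < √(n(n−k−1)), unless G = C_n^k. -/
open SimpleGraph

/-- The graph `C_n^k = O_{k,n−k} ⊔ K_{n−k−1,k}`, a bipartite graph with parts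
`X = Fin (n−1)` (the first `k` vertices forming the part of `O_{k,n−k}`) and
`Y = Fin n` (the first `k` vertices forming the `k`-part of `K_{n−k−1,k}`):
a vertex `x ∈ X` with `x < k` is adjacent exactly to the `y ∈ Y` with `y < k`,
and a vertex `x ∈ X` with `x ≥ k` is adjacent to all of `Y`. -/
def Cnk (n k : ℕ) : SimpleGraph (Fin (n - 1) ⊕ Fin n) :=
  SimpleGraph.fromRel (fun u v =>
    match u, v with
    | Sum.inl x, Sum.inr y => (x.val < k ∧ y.val < k) ∨ k ≤ x.val
    | _, _ => False)

/-- `G` is (up to a relabelling of each part) a bipartite subgraph of `C_n^k`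
with the same bipartition. -/
def SubCnk (n k : ℕ) (G : SimpleGraph (Fin (n - 1) ⊕ Fin n)) : Prop :=
  ∃ (σ : Fin (n - 1) ≃ Fin (n - 1)) (τ : Fin n ≃ Fin n),
    ∀ x y, G.Adj (Sum.inl x) (Sum.inr y) →
      (Cnk n k).Adj (Sum.inl (σ x)) (Sum.inr (τ y))

set_option maxHeartbeats 1600000

section helpers

lemma card_filter_val_lt (m kk : ℕ) (h : kk ≤ m) (hm : 0 < m) :
    ((Finset.univ.filter (fun x : Fin m => x.val < kk)).card) = kk := by
  have e : ∀ i ∈ Finset.range kk, i % m = i := fun i hi => by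
    simp at hi; exact Nat.mod_eq_of_lt (lt_of_lt_of_le hi h)
  have := Finset.card_nbij' (s := Finset.univ.filter (fun x : Fin m => x.val < kk))
    (t := Finset.range kk) (i := fun x => x.val)
    (j := fun i => ⟨i % m, Nat.mod_lt _ hm⟩) ?_ ?_ ?_ ?_
  · rw [this, Finset.card_range]
  · intro x hx; simp at hx ⊢; omega
  · intro i hi; simp only [Finset.mem_filter, Finset.mem_univ, true_and]
    simp only [e i hi]; simpa using hi
  · intro x hx; simp at hx ⊢; exact Fin.ext (by simp [Nat.mod_eq_of_lt x.isLt])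
  · intro i hi; simp only [e i hi]

lemma card_set_lt (n k : ℕ) (hk : k ≤ n) (hn : 0 < n) :
    ({y : Fin n | y.val < k} : Set (Fin n)).ncard = k := by
  rw [Set.ncard_eq_toFinset_card', Set.toFinset_setOf]
  exact card_filter_val_lt n k hk hn

lemma sum_classes {m kk : ℕ} (hkm : kk ≤ m) (hm : 0 < m) (z : Fin m) (F : Fin m → ℝ) (P Q : ℝ)
    (h1 : ∀ x : Fin m, x ≠ z → x.val < kk → F x = P)
    (h2 : ∀ x : Fin m, x ≠ z → kk ≤ x.val → F x = Q) :
    ∑ x, F x = kk * P + (m - kk : ℕ) * Q + (F z - (if z.val < kk then P else Q)) := by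
  have key : ∀ x : Fin m, F x = (if x.val < kk then P else Q)
      + (if x = z then F z - (if z.val < kk then P else Q) else 0) := by
    intro x
    by_cases hxz : x = z
    · subst hxz; simp
    · rcases lt_or_ge x.val kk with hx | hx
      · simp [hxz, hx, h1 x hxz hx]
      · simp [hxz, Nat.not_lt.mpr hx, h2 x hxz hx]
  rw [Finset.sum_congr rfl (fun x _ => key x), Finset.sum_add_distrib]
  rw [Finset.sum_ite_eq' Finset.univ z, Finset.sum_ite]
  simp only [Finset.sum_const, nsmul_eq_mul, Finset.mem_univ, if_true]
  rw [card_filter_val_lt m kk hkm hm]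
  have : (Finset.univ.filter (fun x : Fin m => ¬ x.val < kk)).card = m - kk := by
    have htot := Finset.card_filter_add_card_filter_not
      (s := (Finset.univ : Finset (Fin m))) (p := fun x : Fin m => x.val < kk)
    rw [card_filter_val_lt m kk hkm hm] at htot
    simp at htot ⊢; omega
  rw [this]

lemma spec_bound {V : Type*} [Fintype V] [DecidableEq V] [Nonempty V]
    (A : Matrix V V ℝ) (hA : ∀ i j, 0 ≤ A i j)
    (w : V → ℝ) (hw : ∀ i, 0 < w i) (C : ℝ) (hC : 0 < C)
    (h : ∀ i, ∑ j, (A * A) i j * w j < C * w i) :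
    sSup (spectrum ℝ A) < Real.sqrt C := by
  have hA2 : ∀ i j, 0 ≤ (A * A) i j := by
    intro i j
    rw [Matrix.mul_apply]
    exact Finset.sum_nonneg fun m _ => mul_nonneg (hA i m) (hA m j)
  set C' : ℝ := Finset.univ.sup' Finset.univ_nonempty
      (fun i => (∑ j, (A * A) i j * w j) / w i) with hC'def
  have hC'lt : C' < C := by
    rw [hC'def, Finset.sup'_lt_iff]
    intro i _
    rw [div_lt_iff₀ (hw i)]
    exact h i
  have hC'0 : 0 ≤ C' := by
    obtain ⟨i⟩ := ‹Nonempty V›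
    refine le_trans ?_ (Finset.le_sup' _ (Finset.mem_univ i))
    exact div_nonneg (Finset.sum_nonneg fun j _ => mul_nonneg (hA2 i j) (hw j).le) (hw i).le
  have hmain : ∀ μ ∈ spectrum ℝ A, μ ≤ Real.sqrt C' := by
    intro μ hμ
    rw [spectrum.mem_iff] at hμ
    have hdet : ((algebraMap ℝ (Matrix V V ℝ)) μ - A).det = 0 := by
      by_contra h0
      exact hμ ((Matrix.isUnit_iff_isUnit_det _).mpr (isUnit_iff_ne_zero.mpr h0))
    obtain ⟨v, hv0, hv⟩ := (Matrix.exists_mulVec_eq_zero_iff).mpr hdet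
    have hAv : A.mulVec v = μ • v := by
      rw [Matrix.sub_mulVec, Algebra.algebraMap_eq_smul_one, Matrix.smul_mulVec,
        Matrix.one_mulVec, sub_eq_zero] at hv
      exact hv.symm
    have h2 : (A * A).mulVec v = (μ ^ 2) • v := by
      rw [← Matrix.mulVec_mulVec, hAv, Matrix.mulVec_smul, hAv, smul_smul, sq]
    obtain ⟨i, -, hi⟩ := Finset.exists_max_image Finset.univ (fun i => |v i| / w i)
      Finset.univ_nonempty
    have hvi : 0 < |v i| := by
      rcases (abs_nonneg (v i)).lt_or_eq with h' | h'
      · exact h'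
      · exfalso; apply hv0
        funext j
        have := hi j (Finset.mem_univ j)
        rw [← h'] at this
        have h3 : |v j| / w j ≤ 0 := by simpa using this
        have h4 : |v j| ≤ 0 := by
          by_contra hc; push_neg at hc
          exact absurd h3 (not_le.mpr (div_pos hc (hw j)))
        simpa using le_antisymm h4 (abs_nonneg _)
    have hvj : ∀ j, |v j| ≤ w j * (|v i| / w i) := by
      intro j
      have := hi j (Finset.mem_univ j)
      calc |v j| = (|v j| / w j) * w j := by rw [div_mul_cancel₀ _ (hw j).ne']
        _ ≤ (|v i| / w i) * w j := mul_le_mul_of_nonneg_right this (hw j).le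
        _ = w j * (|v i| / w i) := by ring
    have key : μ ^ 2 * |v i| ≤ C' * |v i| := by
      have e1 : μ ^ 2 * v i = ∑ j, (A * A) i j * v j := by
        have := congrFun h2 i
        simpa [Matrix.mulVec, dotProduct] using this.symm
      calc μ ^ 2 * |v i| = |μ ^ 2 * v i| := by
            rw [abs_mul, abs_of_nonneg (sq_nonneg μ)]
        _ = |∑ j, (A * A) i j * v j| := by rw [e1]
        _ ≤ ∑ j, |(A * A) i j * v j| := Finset.abs_sum_le_sum_abs _ _
        _ = ∑ j, (A * A) i j * |v j| := by
            refine Finset.sum_congr rfl fun j _ => ?_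
            rw [abs_mul, abs_of_nonneg (hA2 i j)]
        _ ≤ ∑ j, (A * A) i j * (w j * (|v i| / w i)) := by
            refine Finset.sum_le_sum fun j _ => mul_le_mul_of_nonneg_left (hvj j) (hA2 i j)
        _ = (∑ j, (A * A) i j * w j) * (|v i| / w i) := by
            rw [Finset.sum_mul]; exact Finset.sum_congr rfl fun j _ => by ring
        _ ≤ (C' * w i) * (|v i| / w i) := by
            refine mul_le_mul_of_nonneg_right ?_ (div_nonneg (abs_nonneg _) (hw i).le)
            rw [← div_le_iff₀ (hw i)]
            exact Finset.le_sup' (f := fun i => (∑ j, (A * A) i j * w j) / w i)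
              (Finset.mem_univ i)
        _ = C' * |v i| := by
            have hwi : w i ≠ 0 := (hw i).ne'
            field_simp
    have hμ2 : μ ^ 2 ≤ C' := le_of_mul_le_mul_right key hvi
    calc μ ≤ |μ| := le_abs_self μ
      _ = Real.sqrt (μ ^ 2) := (Real.sqrt_sq_eq_abs μ).symm
      _ ≤ Real.sqrt C' := Real.sqrt_le_sqrt hμ2
  exact lt_of_le_of_lt (Real.sSup_le hmain (Real.sqrt_nonneg _))
    ((Real.sqrt_lt_sqrt hC'0 hC'lt))

end helpers
lemma paramX (K s0 : ℝ) (hK : 1 ≤ K) (hs : 2 ≤ s0) (hcube : K^3 + 2 ≤ 2*s0) :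
    ∃ a c s : ℝ, 0 < a ∧ 0 < c ∧ c ≤ 1 ∧ s = s0 - 1 + c ∧
      K^2*a + K*s < ((s0+K+1)*s0)*a ∧
      K^2*a + (s0+K+1)*s - c < (s0+K+1)*s0 ∧
      K^2*a + (s0+K)*s < ((s0+K+1)*s0)*c := by
  have hK0 : (0:ℝ) < K := by linarith
  have hs0 : (0:ℝ) < s0 := by linarith
  have hK2K3 : K^2 ≤ K^3 := by nlinarith [sq_nonneg K]
  have hTK : (0:ℝ) < (s0+K+1)*s0 - K^2 := by nlinarith
  have hd1 : (0:ℝ) < s0 + K := by linarith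
  have hd2 : (0:ℝ) < (s0+K+1)*s0 - (s0+K+1) + 1 := by nlinarith
  set Qb := K^2*(K*s0+1)/((s0+K+1)*s0 - K^2) with hQbdef
  have hQb0 : 0 ≤ Qb := by
    apply div_nonneg _ hTK.le
    nlinarith
  have key : Qb * ((s0+K+1)*s0) < 2*((s0+K+1)*s0) - (s0+K+1) - s0 + 1 := by
    rw [hQbdef, div_mul_eq_mul_div, div_lt_iff₀ hTK]
    nlinarith [mul_nonneg (by linarith : (0:ℝ) ≤ 2*s0 - 2 - K^3) (mul_nonneg (mul_nonneg (by linarith : (0:ℝ) ≤ s0+K+1) (by linarith : (0:ℝ) ≤ s0)) (by linarith : (0:ℝ) ≤ s0)),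
      mul_pos (by linarith : (0:ℝ) < s0+K+1) (by linarith : (0:ℝ) < s0),
      mul_nonneg (mul_nonneg (mul_nonneg (by positivity : (0:ℝ) ≤ K^2) (by linarith : (0:ℝ) ≤ K-1)) (by linarith : (0:ℝ) ≤ s0)) (by linarith : (0:ℝ) ≤ s0),
      mul_nonneg (mul_nonneg (by linarith : (0:ℝ) ≤ K-1) (by linarith : (0:ℝ) ≤ s0)) (by linarith : (0:ℝ) ≤ s0),
      mul_nonneg (by linarith : (0:ℝ) ≤ 2*s0 - 2 - K^3) (mul_nonneg (by positivity : (0:ℝ) ≤ K^2) (by linarith : (0:ℝ) ≤ s0)),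
      sq_nonneg (s0 - K), sq_nonneg K]
  have hQb2 : Qb < 2 := by
    nlinarith [key, mul_pos (by linarith : (0:ℝ) < s0+K+1) hs0]
  set l := (Qb - 1)/(s0+K) with hldef
  set u := (s0 - Qb)/((s0+K+1)*s0 - (s0+K+1) + 1) with hudef
  have hlu : l < u := by
    rw [hldef, hudef, div_lt_div_iff₀ hd1 hd2]
    nlinarith [key]
  have hu0 : 0 < u := div_pos (by linarith) hd2
  have hu1 : u < 1 := by
    rw [hudef, div_lt_one hd2]
    nlinarith
  set t := max 0 ((l+u)/2) with htdef
  have ht0 : 0 ≤ t := le_max_left _ _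
  have htu : t < u := max_lt hu0 (by linarith)
  have hQt : Qb < 1 + (s0+K)*t := by
    rcases le_or_gt ((l+u)/2) 0 with hmid | hmid
    · have hteq : t = 0 := max_eq_left hmid
      have hl0 : l < 0 := by linarith
      have : (Qb - 1) < 0 := by
        have h2 := mul_lt_mul_of_pos_right hl0 hd1
        rwa [hldef, div_mul_cancel₀ _ hd1.ne', zero_mul] at h2
      rw [hteq]; linarith
    · have hteq : t = (l+u)/2 := max_eq_right hmid.le
      have hlt : l < t := by rw [hteq]; linarith
      have := mul_lt_mul_of_pos_right hlt hd1
      rw [hldef, div_mul_cancel₀ _ hd1.ne'] at this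
      linarith [this]
  have hQu : Qb < s0 - t*((s0+K+1)*s0 - (s0+K+1) + 1) := by
    have := mul_lt_mul_of_pos_right htu hd2
    rw [hudef, div_mul_cancel₀ _ hd2.ne'] at this
    linarith
  refine ⟨(K*(s0-t)+1)/((s0+K+1)*s0 - K^2), 1 - t, s0 - t, ?_, by linarith, by linarith, by ring, ?_, ?_, ?_⟩
  · apply div_pos _ hTK
    nlinarith [mul_nonneg hK0.le (by linarith : (0:ℝ) ≤ s0 - t - 1)]
  · -- X1
    have := div_mul_cancel₀ (K*(s0-t)+1) hTK.ne'
    nlinarith [this]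
  · -- X2
    have hKa : K^2*((K*(s0-t)+1)/((s0+K+1)*s0 - K^2)) ≤ Qb := by
      rw [hQbdef, mul_div_assoc']
      apply (div_le_div_iff_of_pos_right hTK).mpr
      nlinarith [mul_nonneg (mul_nonneg (by positivity : (0:ℝ) ≤ K^2) hK0.le) ht0]
    linarith [hKa, hQt]
  · -- X3
    have hKa : K^2*((K*(s0-t)+1)/((s0+K+1)*s0 - K^2)) ≤ Qb := by
      rw [hQbdef, mul_div_assoc']
      apply (div_le_div_iff_of_pos_right hTK).mpr
      nlinarith [mul_nonneg (mul_nonneg (by positivity : (0:ℝ) ≤ K^2) hK0.le) ht0]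
    linarith [hKa, hQu]
lemma paramYA (K s0 : ℝ) (hK : 1 ≤ K) (hs : 2 ≤ s0) (hcube : K^3 + 2 ≤ 2*s0) :
    ∃ d f : ℝ, 0 < d ∧ 0 < f ∧
      K^2*d + s0*(K*d) + s0^2 + (s0-1)*f < ((s0+K+1)*s0)*d ∧
      s0*(K*d) + s0^2 + (s0-1)*f < (s0+K+1)*s0 ∧
      (s0-1)*(K*d + s0 + f) < ((s0+K+1)*s0)*f := by
  have hK0 : (0:ℝ) < K := by linarith
  have hs0 : (0:ℝ) < s0 := by linarith
  have hden : (0:ℝ) < s0^2 + s0 - K^2 := by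
    nlinarith [mul_nonneg (by linarith : (0:ℝ) ≤ K-1) (by positivity : (0:ℝ) ≤ K^2), sq_nonneg (s0-1)]
  have hs1 : (0:ℝ) < s0 - 1 := by linarith
  have hd2 : (0:ℝ) < (s0+K+1)*s0 - s0 + 1 := by nlinarith
  set δ := K^2/(s0^2+s0-K^2) with hδdef
  have hδden : δ*(s0^2+s0-K^2) = K^2 := div_mul_cancel₀ _ hden.ne'
  have hδ0 : 0 ≤ δ := div_nonneg (by positivity) hden.le
  have hKδ : K*δ*(s0^2+s0-K^2) = K^3 := by
    have h1 : K*δ*(s0^2+s0-K^2) = K*(δ*(s0^2+s0-K^2)) := by ring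
    rw [h1, hδden]; ring
  have huApos : 0 < (s0+K+1) - (s0-1)*(K*δ) := by
    have e : (s0^2+s0-K^2)*((s0+K+1) - (s0-1)*(K*δ)) =
        (s0+K+1)*(s0^2+s0-K^2) - (s0-1)*K^3 := by
      linear_combination (-(s0-1)) * hKδ
    have hpos : 0 < (s0^2+s0-K^2)*((s0+K+1) - (s0-1)*(K*δ)) := by
      rw [e]
      nlinarith [mul_nonneg (by linarith : (0:ℝ) ≤ 2*s0-2-K^3) (by linarith : (0:ℝ) ≤ s0),
        mul_nonneg (mul_nonneg (by linarith : (0:ℝ) ≤ K-1) (by positivity : (0:ℝ) ≤ K^2)) (by linarith : (0:ℝ) ≤ s0),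
        mul_pos hs0 hs0, mul_nonneg hK0.le hs0.le]
    exact (mul_lt_mul_iff_right₀ hden).mp (by simpa using hpos)
  set lA := (K*δ*s0 - 1)/(s0-1) with hlAdef
  set uA := ((s0+K+1) - (s0-1)*(K*δ))/((s0+K+1)*s0 - s0 + 1) with huAdef
  have hlu : lA < uA := by
    rw [hlAdef, huAdef, div_lt_div_iff₀ hs1 hd2]
    have e1 : (s0^2+s0-K^2)*((K*δ*s0 - 1)*((s0+K+1)*s0 - s0 + 1)) =
        (K^3*s0 - (s0^2+s0-K^2))*((s0+K+1)*s0 - s0 + 1) := by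
      linear_combination (((s0+K+1)*s0 - s0 + 1)*s0) * hKδ
    have e2 : (s0^2+s0-K^2)*((((s0+K+1) - (s0-1)*(K*δ)))*(s0-1)) =
        ((s0+K+1)*(s0^2+s0-K^2) - (s0-1)*K^3)*(s0-1) := by
      linear_combination (-(s0-1)^2) * hKδ
    have goalden : (s0^2+s0-K^2)*((K*δ*s0 - 1)*((s0+K+1)*s0 - s0 + 1)) <
        (s0^2+s0-K^2)*((((s0+K+1) - (s0-1)*(K*δ)))*(s0-1)) := by
      rw [e1, e2]
      nlinarith [mul_nonneg (by linarith : (0:ℝ) ≤ 2*s0-2-K^3) (mul_nonneg (mul_nonneg (by linarith : (0:ℝ) ≤ s0+K+1) (by linarith : (0:ℝ) ≤ s0)) (by linarith : (0:ℝ) ≤ s0)),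
        mul_nonneg (by linarith : (0:ℝ) ≤ 2*s0-2-K^3) (mul_nonneg (by positivity : (0:ℝ) ≤ K^2) (by linarith : (0:ℝ) ≤ s0)),
        mul_nonneg (mul_nonneg (mul_nonneg (by positivity : (0:ℝ) ≤ K^2) (by linarith : (0:ℝ) ≤ K-1)) (by linarith : (0:ℝ) ≤ s0)) (by linarith : (0:ℝ) ≤ s0),
        mul_pos (by linarith : (0:ℝ) < s0+K+1) (by linarith : (0:ℝ) < s0),
        mul_nonneg (mul_nonneg (by linarith : (0:ℝ) ≤ K-1) (by linarith : (0:ℝ) ≤ s0)) (by linarith : (0:ℝ) ≤ s0),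
        sq_nonneg (s0-K), sq_nonneg K]
    exact (mul_lt_mul_iff_right₀ hden).mp goalden
  have huA0 : 0 < uA := div_pos huApos hd2
  have huA1 : uA < 1 := by
    rw [huAdef, div_lt_one hd2]
    have e : (s0^2+s0-K^2)*((s0+K+1) - (s0-1)*(K*δ)) =
        (s0+K+1)*(s0^2+s0-K^2) - (s0-1)*K^3 := by
      linear_combination (-(s0-1)) * hKδ
    have goalden : (s0^2+s0-K^2)*((s0+K+1) - (s0-1)*(K*δ)) <
        (s0^2+s0-K^2)*((s0+K+1)*s0 - s0 + 1) := by
      rw [e]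
      nlinarith [mul_nonneg (by linarith : (0:ℝ) ≤ 2*s0-2-K^3) (by linarith : (0:ℝ) ≤ s0),
        mul_nonneg (mul_nonneg (by linarith : (0:ℝ) ≤ K-1) (by positivity : (0:ℝ) ≤ K^2)) (by linarith : (0:ℝ) ≤ s0),
        mul_pos hs0 hs0,
        mul_nonneg (mul_nonneg (by linarith : (0:ℝ) ≤ K) (by linarith : (0:ℝ) ≤ s0)) (by linarith : (0:ℝ) ≤ s0),
        sq_nonneg (s0-K), sq_nonneg (s0-1)]
    exact (mul_lt_mul_iff_right₀ hden).mp goalden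
  set τ := max 0 ((lA+uA)/2) with hτdef
  have hτ0 : 0 ≤ τ := le_max_left _ _
  have hτu : τ < uA := max_lt huA0 (by linarith)
  have hτd2 : τ*((s0+K+1)*s0 - s0 + 1) < (s0+K+1) - (s0-1)*(K*δ) := by
    have := mul_lt_mul_of_pos_right hτu hd2
    rwa [huAdef, div_mul_cancel₀ _ hd2.ne'] at this
  have hY2h : K*δ*s0 - 1 < τ*(s0-1) := by
    rcases le_or_gt ((lA+uA)/2) 0 with hmid | hmid
    · have hteq : τ = 0 := max_eq_left hmid
      have hl0 : lA < 0 := by linarith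
      have : K*δ*s0 - 1 < 0 := by
        have h2 := mul_lt_mul_of_pos_right hl0 hs1
        rwa [hlAdef, div_mul_cancel₀ _ hs1.ne', zero_mul] at h2
      rw [hteq]; linarith
    · have hteq : τ = (lA+uA)/2 := max_eq_right hmid.le
      have hlt : lA < τ := by rw [hteq]; linarith
      have := mul_lt_mul_of_pos_right hlt hs1
      rw [hlAdef, div_mul_cancel₀ _ hs1.ne'] at this
      linarith
  refine ⟨1 + δ, 1 - τ, by linarith, by linarith, ?_, ?_, ?_⟩
  · -- YA1
    nlinarith [hδden, mul_nonneg hτ0 (by linarith : (0:ℝ) ≤ s0 - 1)]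
  · -- YA2
    nlinarith [hY2h]
  · -- YA3
    nlinarith [hτd2]
lemma paramYB (K s0 : ℝ) (hK : 1 ≤ K) (hs : 2 ≤ s0) (hcube : K^3 + 2 ≤ 2*s0) :
    ∃ d f : ℝ, 0 < d ∧ 0 < f ∧
      (K-1)*((K+s0)*d) + (K+s0-1)*f + s0^2 + s0 < ((s0+K+1)*s0)*d ∧
      (K-1)*(s0*d) + s0^2 + s0 + (s0-1)*f < (s0+K+1)*s0 ∧
      (K-1)*((K+s0-1)*d) + (K+s0-1)*f + s0^2 - 1 < ((s0+K+1)*s0)*f := by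
  have hK0 : (0:ℝ) < K := by linarith
  have hs0 : (0:ℝ) < s0 := by linarith
  have hden : (0:ℝ) < s0^2 + s0 - K^2 + 1 := by
    nlinarith [mul_nonneg (by linarith : (0:ℝ) ≤ K-1) (by positivity : (0:ℝ) ≤ K^2), sq_nonneg (s0-1)]
  have hs1 : (0:ℝ) < s0 - 1 := by linarith
  have hd2 : (0:ℝ) < (s0+K+1)*s0 - (s0+K+1) + 2 := by nlinarith
  set δ := K^2/(s0^2+s0-K^2+1) with hδdef
  have hδden : δ*(s0^2+s0-K^2+1) = K^2 := div_mul_cancel₀ _ hden.ne'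
  have hδ0 : 0 ≤ δ := div_nonneg (by positivity) hden.le
  have huBpos : 0 < (s0+K-K^2+1) + δ*(s0^2+s0-K^2+K) := by
    have e : (s0^2+s0-K^2+1)*((s0+K-K^2+1) + δ*(s0^2+s0-K^2+K)) =
        (s0^2+s0-K^2+1)*(s0+K-K^2+1) + K^2*(s0^2+s0-K^2+K) := by
      linear_combination (s0^2+s0-K^2+K) * hδden
    have hpos : 0 < (s0^2+s0-K^2+1)*((s0+K-K^2+1) + δ*(s0^2+s0-K^2+K)) := by
      rw [e]
      nlinarith [mul_nonneg (by linarith : (0:ℝ) ≤ K-1) (by positivity : (0:ℝ) ≤ K^2),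
        mul_pos hs0 hs0,
        mul_nonneg (by linarith : (0:ℝ) ≤ 2*s0-2-K^3) (by linarith : (0:ℝ) ≤ K+s0),
        sq_nonneg (s0-K), sq_nonneg (K-1)]
    exact (mul_lt_mul_iff_right₀ hden).mp (by simpa using hpos)
  set lB := (δ*(K*s0-1) - 1)/(s0-1) with hlBdef
  set uB := ((s0+K-K^2+1) + δ*(s0^2+s0-K^2+K))/((s0+K+1)*s0 - (s0+K+1) + 2) with huBdef
  have hlu : lB < uB := by
    rw [hlBdef, huBdef, div_lt_div_iff₀ hs1 hd2]
    have e1 : (s0^2+s0-K^2+1)*((δ*(K*s0-1) - 1)*((s0+K+1)*s0 - (s0+K+1) + 2)) =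
        (K^2*(K*s0-1) - (s0^2+s0-K^2+1))*((s0+K+1)*s0 - (s0+K+1) + 2) := by
      linear_combination (((s0+K+1)*s0 - (s0+K+1) + 2)*(K*s0-1)) * hδden
    have e2 : (s0^2+s0-K^2+1)*((((s0+K-K^2+1) + δ*(s0^2+s0-K^2+K)))*(s0-1)) =
        ((s0^2+s0-K^2+1)*(s0+K-K^2+1) + K^2*(s0^2+s0-K^2+K))*(s0-1) := by
      linear_combination ((s0-1)*(s0^2+s0-K^2+K)) * hδden
    have goalden : (s0^2+s0-K^2+1)*((δ*(K*s0-1) - 1)*((s0+K+1)*s0 - (s0+K+1) + 2)) <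
        (s0^2+s0-K^2+1)*((((s0+K-K^2+1) + δ*(s0^2+s0-K^2+K)))*(s0-1)) := by
      rw [e1, e2]
      nlinarith [mul_nonneg (by linarith : (0:ℝ) ≤ 2*s0-2-K^3) (mul_nonneg (mul_nonneg (by linarith : (0:ℝ) ≤ s0+K+1) (by linarith : (0:ℝ) ≤ s0)) (by linarith : (0:ℝ) ≤ s0)),
        mul_nonneg (by linarith : (0:ℝ) ≤ 2*s0-2-K^3) (mul_nonneg (by positivity : (0:ℝ) ≤ K^2) (by linarith : (0:ℝ) ≤ s0)),
        mul_nonneg (mul_nonneg (mul_nonneg (by positivity : (0:ℝ) ≤ K^2) (by linarith : (0:ℝ) ≤ K-1)) (by linarith : (0:ℝ) ≤ s0)) (by linarith : (0:ℝ) ≤ s0),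
        mul_pos (by linarith : (0:ℝ) < s0+K+1) (by linarith : (0:ℝ) < s0),
        mul_nonneg (mul_nonneg (by linarith : (0:ℝ) ≤ K-1) (by linarith : (0:ℝ) ≤ s0)) (by linarith : (0:ℝ) ≤ s0),
        sq_nonneg (s0-K), sq_nonneg K, sq_nonneg (K-1)]
    exact (mul_lt_mul_iff_right₀ hden).mp goalden
  have huB0 : 0 < uB := div_pos huBpos hd2
  have huB1 : uB < 1 := by
    rw [huBdef, div_lt_one hd2]
    have e : (s0^2+s0-K^2+1)*((s0+K-K^2+1) + δ*(s0^2+s0-K^2+K)) =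
        (s0^2+s0-K^2+1)*(s0+K-K^2+1) + K^2*(s0^2+s0-K^2+K) := by
      linear_combination (s0^2+s0-K^2+K) * hδden
    have goalden : (s0^2+s0-K^2+1)*((s0+K-K^2+1) + δ*(s0^2+s0-K^2+K)) <
        (s0^2+s0-K^2+1)*((s0+K+1)*s0 - (s0+K+1) + 2) := by
      rw [e]
      nlinarith [mul_nonneg (by linarith : (0:ℝ) ≤ K-1) (by positivity : (0:ℝ) ≤ K^2),
        mul_pos hs0 hs0,
        mul_nonneg (by linarith : (0:ℝ) ≤ 2*s0-2-K^3) (by linarith : (0:ℝ) ≤ K+s0),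
        mul_nonneg (by linarith : (0:ℝ) ≤ 2*s0-2-K^3) (mul_nonneg (by linarith : (0:ℝ) ≤ s0) (by linarith : (0:ℝ) ≤ s0)),
        mul_nonneg (mul_nonneg (mul_nonneg (by positivity : (0:ℝ) ≤ K^2) (by linarith : (0:ℝ) ≤ K-1)) (by linarith : (0:ℝ) ≤ s0)) (by linarith : (0:ℝ) ≤ s0),
        sq_nonneg (s0-K), sq_nonneg (K-1)]
    exact (mul_lt_mul_iff_right₀ hden).mp goalden
  set τ := max 0 ((lB+uB)/2) with hτdef
  have hτ0 : 0 ≤ τ := le_max_left _ _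
  have hτu : τ < uB := max_lt huB0 (by linarith)
  have hτd2 : τ*((s0+K+1)*s0 - (s0+K+1) + 2) < (s0+K-K^2+1) + δ*(s0^2+s0-K^2+K) := by
    have := mul_lt_mul_of_pos_right hτu hd2
    rwa [huBdef, div_mul_cancel₀ _ hd2.ne'] at this
  have hY2h : δ*(K*s0-1) - 1 < τ*(s0-1) := by
    rcases le_or_gt ((lB+uB)/2) 0 with hmid | hmid
    · have hteq : τ = 0 := max_eq_left hmid
      have hl0 : lB < 0 := by linarith
      have : δ*(K*s0-1) - 1 < 0 := by
        have h2 := mul_lt_mul_of_pos_right hl0 hs1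
        rwa [hlBdef, div_mul_cancel₀ _ hs1.ne', zero_mul] at h2
      rw [hteq]; linarith
    · have hteq : τ = (lB+uB)/2 := max_eq_right hmid.le
      have hlt : lB < τ := by rw [hteq]; linarith
      have := mul_lt_mul_of_pos_right hlt hs1
      rw [hlBdef, div_mul_cancel₀ _ hs1.ne'] at this
      linarith
  refine ⟨1 + δ, 1 + δ - τ, by linarith, by linarith [hτu, huB1], ?_, ?_, ?_⟩
  · -- YB1
    nlinarith [hδden, mul_nonneg hτ0 (by linarith : (0:ℝ) ≤ s0 + K - 1)]
  · -- YB2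
    nlinarith [hY2h]
  · -- YB3
    nlinarith [hτd2]

lemma cnk_adj_lr (n k : ℕ) (x : Fin (n-1)) (y : Fin n) :
    (Cnk n k).Adj (Sum.inl x) (Sum.inr y) ↔ ((x.val < k ∧ y.val < k) ∨ k ≤ x.val) := by
  simp [Cnk, SimpleGraph.fromRel_adj]

lemma cnk_not_adj_ll (n k : ℕ) (x x' : Fin (n-1)) :
    ¬ (Cnk n k).Adj (Sum.inl x) (Sum.inl x') := by
  simp [Cnk, SimpleGraph.fromRel_adj]

lemma cnk_not_adj_rr (n k : ℕ) (y y' : Fin n) :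
    ¬ (Cnk n k).Adj (Sum.inr y) (Sum.inr y') := by
  simp [Cnk, SimpleGraph.fromRel_adj]

lemma exists_missing (n k : ℕ) (hk : 1 ≤ k) (hkn : k + 3 ≤ n)
    (G : SimpleGraph (Fin (n - 1) ⊕ Fin n)) (hsub : G ≤ Cnk n k)
    (hδ : ∀ v, k ≤ (G.neighborSet v).ncard) (hGC : ¬ G = Cnk n k) :
    ∃ x₀ y₀, k ≤ x₀.val ∧ ¬ G.Adj (Sum.inl x₀) (Sum.inr y₀) := by
  have hmiss : ∃ x y, (Cnk n k).Adj (Sum.inl x) (Sum.inr y) ∧ ¬ G.Adj (Sum.inl x) (Sum.inr y) := by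
    by_contra hcon
    push_neg at hcon
    apply hGC
    apply le_antisymm hsub
    intro u v huv
    match u, v with
    | Sum.inl x, Sum.inl x' => exact absurd huv (cnk_not_adj_ll n k x x')
    | Sum.inr y, Sum.inr y' => exact absurd huv (cnk_not_adj_rr n k y y')
    | Sum.inl x, Sum.inr y => exact hcon x y huv
    | Sum.inr y, Sum.inl x => exact (hcon x y huv.symm).symm
  obtain ⟨x₀, y₀, hadj, hnadj⟩ := hmiss
  refine ⟨x₀, y₀, ?_, hnadj⟩
  by_contra hxlt
  push_neg at hxlt
  have hy0lt : y₀.val < k := by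
    rcases (cnk_adj_lr n k x₀ y₀).mp hadj with ⟨_, h⟩ | h
    · exact h
    · omega
  have hsubset : G.neighborSet (Sum.inl x₀) ⊆
      (Sum.inr '' {y : Fin n | y.val < k}) \ {Sum.inr y₀} := by
    intro v hv
    have hv' : G.Adj (Sum.inl x₀) v := hv
    match v with
    | Sum.inl x' => exact absurd (hsub hv') (cnk_not_adj_ll n k x₀ x')
    | Sum.inr y =>
      constructor
      · refine ⟨y, ?_, rfl⟩
        rcases (cnk_adj_lr n k x₀ y).mp (hsub hv') with ⟨_, h⟩ | h
        · exact h
        · omega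
      · simp only [Set.mem_singleton_iff, Sum.inr.injEq]
        intro he
        exact hnadj (he ▸ hv')
  have hcard : (G.neighborSet (Sum.inl x₀)).ncard ≤ k - 1 := by
    have h1 : ((Sum.inr '' {y : Fin n | y.val < k}) \ {Sum.inr y₀} :
        Set (Fin (n-1) ⊕ Fin n)).ncard = k - 1 := by
      have him : ((Sum.inr '' {y : Fin n | y.val < k}) \ {Sum.inr y₀} :
          Set (Fin (n-1) ⊕ Fin n)) = Sum.inr '' ({y : Fin n | y.val < k} \ {y₀}) := by
        rw [Set.image_diff Sum.inr_injective, Set.image_singleton]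
      rw [him, Set.ncard_image_of_injective _ Sum.inr_injective,
        Set.ncard_diff_singleton_of_mem (show y₀ ∈ {y : Fin n | y.val < k} from hy0lt),
        card_set_lt n k (by omega) (by omega)]
    calc (G.neighborSet (Sum.inl x₀)).ncard
        ≤ _ := Set.ncard_le_ncard hsubset (Set.toFinite _)
      _ = k - 1 := h1
  have := hδ (Sum.inl x₀)
  omega

set_option maxHeartbeats 12000000 in
lemma main_aux (n k : ℕ) [instE : DecidableEq (Fin (n - 1) ⊕ Fin n)] (hk : 1 ≤ k)
    (hn : (k : ℝ) ^ 3 / 2 + (k : ℝ) + 2 ≤ (n : ℝ))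
    (G : SimpleGraph (Fin (n - 1) ⊕ Fin n)) (hsub : G ≤ Cnk n k)
    (hδ : ∀ v, k ≤ (G.neighborSet v).ncard) (hGC : ¬ G = Cnk n k)
    (A : Matrix (Fin (n - 1) ⊕ Fin n) (Fin (n - 1) ⊕ Fin n) ℝ)
    (hA1 : ∀ i j, G.Adj i j → A i j = 1) (hAn : ∀ i j, ¬ G.Adj i j → A i j = 0) :
    sSup (spectrum ℝ A) < Real.sqrt ((n : ℝ) * ((n : ℝ) - (k : ℝ) - 1)) := by
  have hK1 : (1:ℝ) ≤ (k:ℝ) := by exact_mod_cast hk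
  have hkn : k + 3 ≤ n := by
    have h5 : (k:ℝ) + 5/2 ≤ (n:ℝ) := by nlinarith [mul_nonneg (sub_nonneg.2 hK1) (sq_nonneg (k:ℝ)), mul_nonneg (sub_nonneg.2 hK1) (by linarith : (0:ℝ) ≤ (k:ℝ)), sq_nonneg ((k:ℝ)-1)]
    have h6 : ((k + 2 : ℕ) : ℝ) < (n:ℝ) := by push_cast; linarith
    have h7 : k + 2 < n := by exact_mod_cast h6
    omega
  obtain ⟨x₀, y₀, hx₀k, hnadj₀⟩ := exists_missing n k hk hkn G hsub hδ hGC
  set K := (k:ℝ) with hKdef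
  set N := (n:ℝ) with hNdef
  have hs2 : (2:ℝ) ≤ N - K - 1 := by
    have : ((k:ℕ):ℝ) + 3 ≤ (n:ℝ) := by exact_mod_cast hkn
    rw [hKdef, hNdef]; linarith
  have hcube : K^3 + 2 ≤ 2*(N - K - 1) := by rw [hKdef, hNdef]; linarith
  obtain ⟨a, c, s, ha, hc, hc1, hsdef, hX1, hX2, hX3⟩ := paramX K (N - K - 1) hK1 hs2 hcube
  subst hsdef
  obtain ⟨d, f, hd, hf, hY1, hY2, hY3⟩ :
      ∃ d f : ℝ, 0 < d ∧ 0 < f ∧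
        (K*(K*d + (if y₀.val < k then f - d else 0))
          + (N-K-2)*(K*d + (N-K) + f - (if y₀.val < k then d else 1))
          + (K*d + (N-K) - (if y₀.val < k then d else 1))
          < (N*(N-K-1))*d) ∧
        ((N-K-2)*(K*d + (N-K) + f - (if y₀.val < k then d else 1))
          + (K*d + (N-K) - (if y₀.val < k then d else 1))
          < N*(N-K-1)) ∧
        (K*(if y₀.val < k then (K*d + (if y₀.val < k then f - d else 0)) else 0)
          + (N-K-2)*(K*d + (N-K) + f - (if y₀.val < k then d else 1))
          < (N*(N-K-1))*f) := by
    by_cases hy₀k : y₀.val < k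
    · obtain ⟨d, f, hd, hf, h1, h2, h3⟩ := paramYB K (N - K - 1) hK1 hs2 hcube
      refine ⟨d, f, hd, hf, ?_, ?_, ?_⟩ <;> simp only [if_pos hy₀k] <;> nlinarith [h1, h2, h3]
    · obtain ⟨d, f, hd, hf, h1, h2, h3⟩ := paramYA K (N - K - 1) hK1 hs2 hcube
      refine ⟨d, f, hd, hf, ?_, ?_, ?_⟩ <;> simp only [if_neg hy₀k] <;> nlinarith [h1, h2, h3]
  -- definitions
  set wX : Fin (n-1) → ℝ := fun x => if x.val < k then a else if x = x₀ then c else 1 with hwX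
  set wY : Fin n → ℝ := fun y => if y = y₀ then f else if y.val < k then d else 1 with hwY
  set w : Fin (n-1) ⊕ Fin n → ℝ := Sum.elim wX wY with hw
  set HX : Fin (n-1) → Fin n → ℝ := fun x y =>
    if ((x.val < k ∧ y.val < k) ∨ (k ≤ x.val ∧ ¬(x = x₀ ∧ y = y₀))) then 1 else 0 with hHX
  set Lt := K*d + (if y₀.val < k then f - d else 0) with hLt
  set Ge := K*d + (N-K) + f - (if y₀.val < k then d else 1) with hGe
  set Zv := K*d + (N-K) - (if y₀.val < k then d else 1) with hZv
  set SY : Fin n → ℝ := fun y =>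
    K*(if y.val < k then a else 0) + (N-1-K) + ((if y = y₀ then 0 else 1)*c - 1) with hSY
  set SX : Fin (n-1) → ℝ := fun x => if x.val < k then Lt else if x = x₀ then Zv else Ge with hSX
  -- numeric facts
  have hm1 : 0 < n - 1 := by omega
  have hn0 : 0 < n := by omega
  have hkm1 : k ≤ n - 1 := by omega
  have hkm2 : k ≤ n := by omega
  have hx₀nlt : ¬ x₀.val < k := Nat.not_lt.mpr hx₀k
  have hcast1 : (((n - 1) - k : ℕ) : ℝ) = N - 1 - K := by
    rw [hNdef, hKdef]
    have h' : (n-1) - k = n - (1 + k) := by omega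
    rw [h', Nat.cast_sub (by omega)]; push_cast; ring
  have hcast2 : ((n - k : ℕ) : ℝ) = N - K := by
    rw [hNdef, hKdef, Nat.cast_sub (by omega)]
  -- weight positivity
  have hwXpos : ∀ x, 0 < wX x := by
    intro x; rw [hwX]; dsimp only; split
    · exact ha
    · split
      · exact hc
      · norm_num
  have hwYpos : ∀ y, 0 < wY y := by
    intro y; rw [hwY]; dsimp only; split
    · exact hf
    · split
      · exact hd
      · norm_num
  have hwpos : ∀ i, 0 < w i := by
    intro i; rw [hw]; match i with
    | Sum.inl x => exact hwXpos x
    | Sum.inr y => exact hwYpos y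
  -- adjacency entry facts
  have hA0 : ∀ i j, 0 ≤ A i j := by
    intro i j
    by_cases h : G.Adj i j
    · rw [hA1 i j h]; norm_num
    · rw [hAn i j h]
  have hAll : ∀ (x x' : Fin (n-1)), A (Sum.inl x) (Sum.inl x') = 0 := by
    intro x x'
    exact hAn _ _ (fun h => (cnk_not_adj_ll n k x x') (hsub h))
  have hArr : ∀ (y y' : Fin n), A (Sum.inr y) (Sum.inr y') = 0 := by
    intro y y'
    exact hAn _ _ (fun h => (cnk_not_adj_rr n k y y') (hsub h))
  have hHX0 : ∀ x y, 0 ≤ HX x y := by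
    intro x y; rw [hHX]; dsimp only; split <;> norm_num
  have hAH : ∀ x y, A (Sum.inl x) (Sum.inr y) ≤ HX x y := by
    intro x y
    by_cases h : G.Adj (Sum.inl x) (Sum.inr y)
    · rw [hA1 _ _ h, hHX]; dsimp only
      rw [if_pos]
      have h2 := (cnk_adj_lr n k x y).mp (hsub h)
      have hne : ¬(x = x₀ ∧ y = y₀) := by
        rintro ⟨rfl, rfl⟩; exact hnadj₀ h
      rcases h2 with h3 | h3
      · exact Or.inl h3
      · exact Or.inr ⟨h3, hne⟩
    · rw [hAn _ _ h]; exact hHX0 x y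
  have hAsymm : ∀ x y, A (Sum.inr y) (Sum.inl x) = A (Sum.inl x) (Sum.inr y) := by
    intro x y
    by_cases h : G.Adj (Sum.inl x) (Sum.inr y)
    · rw [hA1 _ _ h, hA1 _ _ h.symm]
    · rw [hAn _ _ h, hAn _ _ (fun h' => h h'.symm)]
  -- row sums of HX against wX
  have hSYsum : ∀ y, ∑ x, HX x y * wX x = SY y := by
    intro y
    have h1 : ∀ x : Fin (n-1), x ≠ x₀ → x.val < k →
        HX x y * wX x = (if y.val < k then a else 0) := by
      intro x hxz hxk
      have hnk : ¬ k ≤ x.val := Nat.not_le.mpr hxk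
      rw [hHX, hwX]; dsimp only
      by_cases hyk : y.val < k
      · simp [hxk, hyk, hnk]
      · simp [hxk, hyk, hnk]
    have h2 : ∀ x : Fin (n-1), x ≠ x₀ → k ≤ x.val → HX x y * wX x = 1 := by
      intro x hxz hxk
      rw [hHX, hwX]; dsimp only
      simp [hxz, Nat.not_lt.mpr hxk, hxk]
    have e := sum_classes hkm1 hm1 x₀ (fun x => HX x y * wX x) _ _ h1 h2
    rw [e, hcast1]
    have e1 : HX x₀ y * wX x₀ = (if y = y₀ then 0 else 1)*c := by
      rw [hHX, hwX]; dsimp only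
      by_cases hyy : y = y₀
      · simp [hyy, hx₀nlt, hx₀k]
      · simp [hyy, hx₀nlt, hx₀k]
    rw [e1, if_neg hx₀nlt, hSY]
    ring
  -- row sums of HX against wY
  have hSXsum : ∀ x, ∑ y, HX x y * wY y = SX x := by
    intro x
    by_cases hxk : x.val < k
    · have hnk : ¬ k ≤ x.val := Nat.not_le.mpr hxk
      have h1 : ∀ y : Fin n, y ≠ y₀ → y.val < k → HX x y * wY y = d := by
        intro y hyz hyk
        rw [hHX, hwY]; dsimp only
        simp [hxk, hyk, hyz, hnk]
      have h2 : ∀ y : Fin n, y ≠ y₀ → k ≤ y.val → HX x y * wY y = 0 := by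
        intro y hyz hyk
        rw [hHX, hwY]; dsimp only
        simp [hnk, Nat.not_lt.mpr hyk]
      have e := sum_classes hkm2 hn0 y₀ (fun y => HX x y * wY y) _ _ h1 h2
      rw [e, hcast2]
      have e1 : HX x y₀ * wY y₀ = (if y₀.val < k then 1 else 0) * f := by
        rw [hHX, hwY]; dsimp only
        by_cases hyk : y₀.val < k
        · simp [hxk, hyk, hnk]
        · simp [hxk, hyk, hnk]
      rw [e1, hSX]; dsimp only
      rw [if_pos hxk, hLt]
      by_cases hyk : y₀.val < k <;> simp only [hyk, if_true, if_false] <;> ring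
    · -- x ≥ k
      have hxk' : k ≤ x.val := Nat.not_lt.mp hxk
      by_cases hxz : x = x₀
      · subst hxz
        have h1 : ∀ y : Fin n, y ≠ y₀ → y.val < k → HX x y * wY y = d := by
          intro y hyz hyk
          rw [hHX, hwY]; dsimp only
          simp [hyz, hyk, hxk']
        have h2 : ∀ y : Fin n, y ≠ y₀ → k ≤ y.val → HX x y * wY y = 1 := by
          intro y hyz hyk
          rw [hHX, hwY]; dsimp only
          simp [hyz, hyk, Nat.not_lt.mpr hyk, hxk']
        have e := sum_classes hkm2 hn0 y₀ (fun y => HX x y * wY y) _ _ h1 h2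
        rw [e, hcast2]
        have e1 : HX x y₀ * wY y₀ = 0 := by
          rw [hHX]; dsimp only
          rw [if_neg]; · ring
          rintro (⟨h3, _⟩ | ⟨_, h4⟩)
          · exact hxk h3
          · exact h4 ⟨rfl, rfl⟩
        rw [e1, hSX]; dsimp only
        rw [if_neg hxk, if_pos rfl, hZv]
        by_cases hyk : y₀.val < k <;> simp only [hyk, if_true, if_false] <;> ring
      · have h1 : ∀ y : Fin n, y ≠ y₀ → y.val < k → HX x y * wY y = d := by
          intro y hyz hyk
          rw [hHX, hwY]; dsimp only
          simp [hyz, hyk, hxk', hxz]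
        have h2 : ∀ y : Fin n, y ≠ y₀ → k ≤ y.val → HX x y * wY y = 1 := by
          intro y hyz hyk
          rw [hHX, hwY]; dsimp only
          simp [hyz, hyk, Nat.not_lt.mpr hyk, hxk', hxz]
        have e := sum_classes hkm2 hn0 y₀ (fun y => HX x y * wY y) _ _ h1 h2
        rw [e, hcast2]
        have e1 : HX x y₀ * wY y₀ = f := by
          rw [hHX, hwY]; dsimp only
          simp [hxk', hxz]
        rw [e1, hSX]; dsimp only
        rw [if_neg hxk, if_neg hxz, hGe]
        by_cases hyk : y₀.val < k <;> simp only [hyk, if_true, if_false] <;> ring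
    -- Xi_X bounds
  have hXiX : ∀ x : Fin (n-1), (∑ y, HX x y * SY y) < (N*(N-K-1)) * wX x := by
    intro x
    by_cases hxk : x.val < k
    · have hnk : ¬ k ≤ x.val := Nat.not_le.mpr hxk
      have h1 : ∀ y : Fin n, y ≠ y₀ → y.val < k →
          HX x y * SY y = K*a + (N-1-K) + (c-1) := by
        intro y hyz hyk
        rw [hHX, hSY]; dsimp only
        rw [if_pos (Or.inl ⟨hxk, hyk⟩), if_pos hyk, if_neg hyz]; ring
      have h2 : ∀ y : Fin n, y ≠ y₀ → k ≤ y.val → HX x y * SY y = 0 := by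
        intro y hyz hyk
        rw [hHX]; dsimp only
        rw [if_neg]; · ring
        rintro (⟨_, h3⟩ | ⟨h3, _⟩)
        · omega
        · exact hnk h3
      have e := sum_classes hkm2 hn0 y₀ (fun y => HX x y * SY y) _ _ h1 h2
      have eH : HX x y₀ = (if y₀.val < k then 1 else 0) := by
        rw [hHX]; dsimp only
        by_cases hyk : y₀.val < k
        · rw [if_pos (Or.inl ⟨hxk, hyk⟩), if_pos hyk]
        · rw [if_neg, if_neg hyk]
          rintro (⟨_, h3⟩ | ⟨h3, _⟩)
          · exact hyk h3
          · exact hnk h3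
      have eS : SY y₀ = K*(if y₀.val < k then a else 0) + (N-1-K) + (0*c-1) := by
        rw [hSY]; dsimp only; rw [if_pos rfl]
      rw [e, hcast2, eH, eS, hwX]; dsimp only
      rw [if_pos hxk]
      by_cases hyk : y₀.val < k <;> simp only [hyk, if_true, if_false] <;>
        nlinarith [hX1, hc]
    · have hxk' : k ≤ x.val := Nat.not_lt.mp hxk
      have h1 : ∀ y : Fin n, y ≠ y₀ → y.val < k →
          HX x y * SY y = K*a + (N-1-K) + (c-1) := by
        intro y hyz hyk
        rw [hHX, hSY]; dsimp only
        rw [if_pos (Or.inr ⟨hxk', fun hp => hyz hp.2⟩), if_pos hyk, if_neg hyz]; ring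
      have h2 : ∀ y : Fin n, y ≠ y₀ → k ≤ y.val →
          HX x y * SY y = (N-1-K) + (c-1) := by
        intro y hyz hyk
        rw [hHX, hSY]; dsimp only
        rw [if_pos (Or.inr ⟨hxk', fun hp => hyz hp.2⟩), if_neg (by omega : ¬ y.val < k),
          if_neg hyz]; ring
      have e := sum_classes hkm2 hn0 y₀ (fun y => HX x y * SY y) _ _ h1 h2
      by_cases hxz : x = x₀
      · have eF : HX x y₀ * SY y₀ = 0 := by
          rw [hHX]; dsimp only
          rw [if_neg]; · ring
          rintro (⟨h3, _⟩ | ⟨_, h3⟩)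
          · exact hxk h3
          · exact h3 ⟨hxz, rfl⟩
        rw [e, hcast2, eF, hwX]; dsimp only
        rw [if_neg hxk, if_pos hxz]
        by_cases hyk : y₀.val < k <;> simp only [hyk, if_true, if_false] <;>
          nlinarith [hX3, mul_nonneg (by linarith : (0:ℝ) ≤ K) ha.le, hc, hs2]
      · have eF : HX x y₀ * SY y₀ =
            K*(if y₀.val < k then a else 0) + (N-1-K) + (0*c-1) := by
          rw [hHX, hSY]; dsimp only
          rw [if_pos (Or.inr ⟨hxk', fun hp => hxz hp.1⟩), if_pos rfl]; ring
        rw [e, hcast2, eF, hwX]; dsimp only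
        rw [if_neg hxk, if_neg hxz]
        by_cases hyk : y₀.val < k <;> simp only [hyk, if_true, if_false] <;>
          nlinarith [hX2, hc]
  -- Xi_Y bounds
  have hXiY : ∀ y : Fin n, (∑ x, HX x y * SX x) < (N*(N-K-1)) * wY y := by
    intro y
    by_cases hyz : y = y₀
    · subst hyz
      have h1 : ∀ x : Fin (n-1), x ≠ x₀ → x.val < k →
          HX x y * SX x = (if y.val < k then Lt else 0) := by
        intro x hxz hxk
        rw [hHX, hSX]; dsimp only
        rw [if_pos hxk]
        by_cases hyk : y.val < k
        · rw [if_pos (Or.inl ⟨hxk, hyk⟩), if_pos hyk]; ring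
        · rw [if_neg, if_neg hyk]; · ring
          rintro (⟨_, h3⟩ | ⟨h3, _⟩)
          · exact hyk h3
          · omega
      have h2 : ∀ x : Fin (n-1), x ≠ x₀ → k ≤ x.val → HX x y * SX x = Ge := by
        intro x hxz hxk
        rw [hHX, hSX]; dsimp only
        rw [if_pos (Or.inr ⟨hxk, fun hp => hxz hp.1⟩), if_neg (by omega : ¬ x.val < k),
          if_neg hxz]; ring
      have e := sum_classes hkm1 hm1 x₀ (fun x => HX x y * SX x) _ _ h1 h2
      have eF : HX x₀ y * SX x₀ = 0 := by
        rw [hHX]; dsimp only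
        rw [if_neg]; · ring
        rintro (⟨h3, _⟩ | ⟨_, h3⟩)
        · exact hx₀nlt h3
        · exact h3 ⟨rfl, rfl⟩
      rw [e, hcast1, eF, hwY]; dsimp only
      rw [if_pos rfl, if_neg hx₀nlt]
      linarith [hY3]
    · by_cases hyk : y.val < k
      · have h1 : ∀ x : Fin (n-1), x ≠ x₀ → x.val < k → HX x y * SX x = Lt := by
          intro x hxz hxk
          rw [hHX, hSX]; dsimp only
          rw [if_pos (Or.inl ⟨hxk, hyk⟩), if_pos hxk]; ring
        have h2 : ∀ x : Fin (n-1), x ≠ x₀ → k ≤ x.val → HX x y * SX x = Ge := by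
          intro x hxz hxk
          rw [hHX, hSX]; dsimp only
          rw [if_pos (Or.inr ⟨hxk, fun hp => hxz hp.1⟩), if_neg (by omega : ¬ x.val < k),
            if_neg hxz]; ring
        have e := sum_classes hkm1 hm1 x₀ (fun x => HX x y * SX x) _ _ h1 h2
        have eF : HX x₀ y * SX x₀ = Zv := by
          rw [hHX, hSX]; dsimp only
          rw [if_pos (Or.inr ⟨hx₀k, fun hp => hyz hp.2⟩), if_neg hx₀nlt, if_pos rfl]; ring
        rw [e, hcast1, eF, hwY]; dsimp only
        rw [if_neg hyz, if_pos hyk, if_neg hx₀nlt]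
        linarith [hY1]
      · have h1 : ∀ x : Fin (n-1), x ≠ x₀ → x.val < k → HX x y * SX x = 0 := by
          intro x hxz hxk
          rw [hHX]; dsimp only
          rw [if_neg]; · ring
          rintro (⟨_, h3⟩ | ⟨h3, _⟩)
          · exact hyk h3
          · omega
        have h2 : ∀ x : Fin (n-1), x ≠ x₀ → k ≤ x.val → HX x y * SX x = Ge := by
          intro x hxz hxk
          rw [hHX, hSX]; dsimp only
          rw [if_pos (Or.inr ⟨hxk, fun hp => hxz hp.1⟩), if_neg (by omega : ¬ x.val < k),
            if_neg hxz]; ring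
        have e := sum_classes hkm1 hm1 x₀ (fun x => HX x y * SX x) _ _ h1 h2
        have eF : HX x₀ y * SX x₀ = Zv := by
          rw [hHX, hSX]; dsimp only
          rw [if_pos (Or.inr ⟨hx₀k, fun hp => hyz hp.2⟩), if_neg hx₀nlt, if_pos rfl]; ring
        rw [e, hcast1, eF, hwY]; dsimp only
        rw [if_neg hyz, if_neg hyk, if_neg hx₀nlt]
        linarith [hY2]
  -- Sv bounds
  have hwl : ∀ x, w (Sum.inl x) = wX x := fun x => rfl
  have hwr : ∀ y, w (Sum.inr y) = wY y := fun y => rfl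
  have hSv0 : ∀ m, 0 ≤ ∑ j, A m j * w j :=
    fun m => Finset.sum_nonneg fun j _ => mul_nonneg (hA0 m j) (hwpos j).le
  have hSvY : ∀ y, (∑ j, A (Sum.inr y) j * w j) ≤ SY y := by
    intro y
    rw [Fintype.sum_sum_type]
    have e2 : ∑ y' : Fin n, A (Sum.inr y) (Sum.inr y') * w (Sum.inr y') = 0 :=
      Finset.sum_eq_zero (fun y' _ => by rw [hArr]; ring)
    rw [e2, add_zero]
    calc ∑ x, A (Sum.inr y) (Sum.inl x) * w (Sum.inl x)
        ≤ ∑ x, HX x y * wX x := by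
          refine Finset.sum_le_sum fun x _ => ?_
          rw [hwl]
          exact mul_le_mul_of_nonneg_right (by rw [hAsymm]; exact hAH x y) (hwXpos x).le
      _ = SY y := hSYsum y
  have hSvX : ∀ x, (∑ j, A (Sum.inl x) j * w j) ≤ SX x := by
    intro x
    rw [Fintype.sum_sum_type]
    have e2 : ∑ x' : Fin (n-1), A (Sum.inl x) (Sum.inl x') * w (Sum.inl x') = 0 :=
      Finset.sum_eq_zero (fun x' _ => by rw [hAll]; ring)
    rw [e2, zero_add]
    calc ∑ y, A (Sum.inl x) (Sum.inr y) * w (Sum.inr y)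
        ≤ ∑ y, HX x y * wY y := by
          refine Finset.sum_le_sum fun y _ => ?_
          rw [hwr]
          exact mul_le_mul_of_nonneg_right (hAH x y) (hwYpos y).le
      _ = SX x := hSXsum x
  have hdouble : ∀ i, ∑ j, (A*A) i j * w j = ∑ m, A i m * (∑ j, A m j * w j) := by
    intro i
    simp only [Matrix.mul_apply]
    calc ∑ j, (∑ m, A i m * A m j) * w j
        = ∑ j, ∑ m, A i m * (A m j * w j) := by
          refine Finset.sum_congr rfl fun j _ => ?_
          rw [Finset.sum_mul]
          exact Finset.sum_congr rfl fun m _ => by ring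
      _ = ∑ m, ∑ j, A i m * (A m j * w j) := Finset.sum_comm
      _ = ∑ m, A i m * (∑ j, A m j * w j) := by
          refine Finset.sum_congr rfl fun m _ => ?_
          rw [Finset.mul_sum]
  have hMAIN : ∀ i, ∑ j, (A*A) i j * w j < (N*(N-K-1)) * w i := by
    intro i
    rw [hdouble i]
    match i with
    | Sum.inl x =>
      rw [Fintype.sum_sum_type]
      have e0 : ∑ x' : Fin (n-1), A (Sum.inl x) (Sum.inl x') * (∑ j, A (Sum.inl x') j * w j) = 0 :=
        Finset.sum_eq_zero fun x' _ => by rw [hAll]; ring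
      rw [e0, zero_add, hwl]
      calc ∑ y, A (Sum.inl x) (Sum.inr y) * (∑ j, A (Sum.inr y) j * w j)
          ≤ ∑ y, HX x y * SY y := by
            refine Finset.sum_le_sum fun y _ => ?_
            have hSY0 : 0 ≤ SY y := le_trans (hSv0 _) (hSvY y)
            exact mul_le_mul (hAH x y) (hSvY y) (hSv0 _) (hHX0 x y)
        _ < (N*(N-K-1)) * wX x := hXiX x
    | Sum.inr y =>
      rw [Fintype.sum_sum_type]
      have e0 : ∑ y' : Fin n, A (Sum.inr y) (Sum.inr y') * (∑ j, A (Sum.inr y') j * w j) = 0 :=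
        Finset.sum_eq_zero fun y' _ => by rw [hArr]; ring
      rw [e0, add_zero, hwr]
      calc ∑ x, A (Sum.inr y) (Sum.inl x) * (∑ j, A (Sum.inl x) j * w j)
          ≤ ∑ x, HX x y * SX x := by
            refine Finset.sum_le_sum fun x _ => ?_
            exact mul_le_mul (by rw [hAsymm]; exact hAH x y) (hSvX x) (hSv0 _) (hHX0 x y)
        _ < (N*(N-K-1)) * wY y := hXiY y
  haveI : Nonempty (Fin (n-1) ⊕ Fin n) := ⟨Sum.inr ⟨0, hn0⟩⟩
  have hC : 0 < N*(N-K-1) := mul_pos (by linarith : (0:ℝ) < N) (by linarith : (0:ℝ) < N-K-1)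
  exact spec_bound A hA0 w hwpos (N*(N-K-1)) hC hMAIN


/-- Let `k ≥ 1`, `n ≥ k³/2 + k + 2`, and let `G` be a subgraph of
`C_n^k` with minimum degree at least `k`. Then `μ(G) < √(n(n−k−1))` unless
`G = C_n^k`. -/
theorem stmt_8 (n k : ℕ) (hk : 1 ≤ k)
    (hn : (k : ℝ) ^ 3 / 2 + (k : ℝ) + 2 ≤ (n : ℝ))
    (G : SimpleGraph (Fin (n - 1) ⊕ Fin n)) (hsub : G ≤ Cnk n k)
    (hδ : ∀ v, k ≤ (G.neighborSet v).ncard) :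
    specRad G < Real.sqrt ((n : ℝ) * ((n : ℝ) - k - 1)) ∨ G = Cnk n k := by
  by_cases hGC : G = Cnk n k
  · right; exact hGC
  · left
    unfold specRad
    exact main_aux n k (instE := Classical.decEq _) hk hn G hsub hδ hGC _
      (fun i j h => by rw [SimpleGraph.adjMatrix_apply, if_pos h])
      (fun i j h => by rw [SimpleGraph.adjMatrix_apply, if_neg h])
end

section
/- If G is a graph of order n with m edges and minimum degree δ, then μ(G) ≤ (δ−1)/2 + √(2m − nδ + (δ+1)²/4). -/
open SimpleGraph

section auxiliaryHSF

open Matrix Finset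

variable {n : Type*} [Fintype n] [DecidableEq n]

lemma aux_spectrum_eq_range {A : Matrix n n ℝ} (hA : A.IsHermitian) :
    spectrum ℝ A = Set.range hA.eigenvalues := by
  have h : (RCLike.ofReal ∘ hA.eigenvalues : n → ℝ) = hA.eigenvalues := by
    funext i; simp
  conv_lhs => rw [hA.spectral_theorem]
  rw [Unitary.conjStarAlgAut_apply, Unitary.spectrum_star_right_conjugate, h, spectrum_diagonal]

lemma aux_isHermitian_adjMatrix {V : Type*} [Fintype V] (G : SimpleGraph V)
    [DecidableRel G.Adj] : (G.adjMatrix ℝ).IsHermitian :=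
  (Matrix.conjTranspose_eq_transpose_of_trivial _).trans (SimpleGraph.transpose_adjMatrix G)

lemma aux_perron {V : Type*} [Fintype V] [DecidableEq V] [Nonempty V]
    (G : SimpleGraph V) [DecidableRel G.Adj] :
    ∃ (μ : ℝ) (y : V → ℝ) (u : V),
      sSup (spectrum ℝ (G.adjMatrix ℝ)) = μ ∧
      G.adjMatrix ℝ *ᵥ y = μ • y ∧ y u = 1 ∧ (∀ w, 0 ≤ y w) ∧ (∀ w, y w ≤ 1) := by
  classical
  set A := G.adjMatrix ℝ with hAdef
  have hA : A.IsHermitian := aux_isHermitian_adjMatrix G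
  have hApos : ∀ i j, 0 ≤ A i j := by
    intro i j
    by_cases h : G.Adj i j <;> simp [hAdef, SimpleGraph.adjMatrix_apply, h]
  have hAle1 : ∀ i j, A i j ≤ 1 := by
    intro i j
    by_cases h : G.Adj i j <;> simp [hAdef, SimpleGraph.adjMatrix_apply, h]
  obtain ⟨i0, -, hmax'⟩ := Finset.exists_max_image Finset.univ hA.eigenvalues
    ⟨Classical.arbitrary V, Finset.mem_univ _⟩
  have hmax : ∀ i, hA.eigenvalues i ≤ hA.eigenvalues i0 := fun i => hmax' i (Finset.mem_univ i)
  set μ := hA.eigenvalues i0 with hμdef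
  have hrange := aux_spectrum_eq_range hA
  have hmem : μ ∈ spectrum ℝ A := by rw [hrange]; exact ⟨i0, rfl⟩
  have hsSup : sSup (spectrum ℝ A) = μ := by
    refine le_antisymm (csSup_le ⟨μ, hmem⟩ ?_) (le_csSup (Matrix.finite_spectrum A).bddAbove hmem)
    intro x hx
    rw [hrange] at hx
    obtain ⟨i, rfl⟩ := hx
    exact hmax i
  have hUstar : (hA.eigenvectorUnitary : Matrix V V ℝ) *
      star (hA.eigenvectorUnitary : Matrix V V ℝ) = 1 :=
    Matrix.mem_unitaryGroup_iff.mp hA.eigenvectorUnitary.2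
  have hdiag : μ • (1 : Matrix V V ℝ) - A =
      (hA.eigenvectorUnitary : Matrix V V ℝ) *
        Matrix.diagonal (fun i => μ - hA.eigenvalues i) *
        (hA.eigenvectorUnitary : Matrix V V ℝ)ᴴ := by
    have h1 : Matrix.diagonal (fun i => μ - hA.eigenvalues i) =
        μ • (1 : Matrix V V ℝ) - Matrix.diagonal (RCLike.ofReal ∘ hA.eigenvalues) := by
      ext i j
      by_cases h : i = j <;>
        simp [Matrix.diagonal_apply, Matrix.one_apply, h, Matrix.smul_apply]
    have hst := hA.spectral_theorem
    rw [Unitary.conjStarAlgAut_apply] at hst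
    rw [← Matrix.star_eq_conjTranspose, h1, Matrix.mul_sub, Matrix.sub_mul,
      ← hst]
    congr 1
    symm
    calc (hA.eigenvectorUnitary : Matrix V V ℝ) * (μ • (1 : Matrix V V ℝ)) *
          star (hA.eigenvectorUnitary : Matrix V V ℝ)
        = μ • ((hA.eigenvectorUnitary : Matrix V V ℝ) * 1 *
            star (hA.eigenvectorUnitary : Matrix V V ℝ)) := by
          rw [mul_smul_comm, smul_mul_assoc]
      _ = μ • (1 : Matrix V V ℝ) := by rw [Matrix.mul_one, hUstar]
  have hPSD : (μ • (1 : Matrix V V ℝ) - A).PosSemidef := by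
    rw [hdiag]
    refine Matrix.PosSemidef.mul_mul_conjTranspose_same ?_ _
    refine Matrix.PosSemidef.diagonal ?_
    intro i
    exact sub_nonneg.mpr (hmax i)
  have hexp : ∀ z : V → ℝ, z ⬝ᵥ ((μ • (1 : Matrix V V ℝ) - A) *ᵥ z)
      = μ * (z ⬝ᵥ z) - z ⬝ᵥ (A *ᵥ z) := by
    intro z
    rw [Matrix.sub_mulVec, Matrix.smul_mulVec, Matrix.one_mulVec, dotProduct_sub,
      dotProduct_smul, smul_eq_mul]
  have hray : ∀ z : V → ℝ, z ⬝ᵥ (A *ᵥ z) ≤ μ * (z ⬝ᵥ z) := by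
    intro z
    have h0 := hPSD.dotProduct_mulVec_nonneg z
    rw [star_trivial, hexp] at h0
    linarith
  set v : V → ℝ := ⇑(hA.eigenvectorBasis i0) with hv
  have hveq : A *ᵥ v = μ • v := hA.mulVec_eigenvectorBasis i0
  have hvne : v ≠ 0 := by
    intro h
    exact hA.eigenvectorBasis.orthonormal.ne_zero i0 (by ext i; exact congrFun h i)
  set x : V → ℝ := fun i => |v i| with hx
  have hxx : x ⬝ᵥ x = v ⬝ᵥ v := by
    simp [dotProduct, hx, abs_mul_abs_self]
  have hAv : v ⬝ᵥ (A *ᵥ v) = μ * (v ⬝ᵥ v) := by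
    rw [hveq, dotProduct_smul, smul_eq_mul]
  have hxAx : v ⬝ᵥ (A *ᵥ v) ≤ x ⬝ᵥ (A *ᵥ x) := by
    unfold dotProduct Matrix.mulVec
    refine Finset.sum_le_sum fun i _ => ?_
    unfold dotProduct
    rw [Finset.mul_sum, Finset.mul_sum]
    refine Finset.sum_le_sum fun j _ => ?_
    calc v i * (A i j * v j) ≤ |v i * (A i j * v j)| := le_abs_self _
      _ = x i * (A i j * x j) := by
          rw [abs_mul, abs_mul, abs_of_nonneg (hApos i j)]
  have heq : x ⬝ᵥ (A *ᵥ x) = μ * (x ⬝ᵥ x) :=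
    le_antisymm (hray x) (by rw [hxx, ← hAv]; exact hxAx)
  have hMx : (μ • (1 : Matrix V V ℝ) - A) *ᵥ x = 0 := by
    have h2 : x ⬝ᵥ ((μ • (1 : Matrix V V ℝ) - A) *ᵥ x) = 0 := by
      rw [hexp, heq]; ring
    exact (hPSD.dotProduct_mulVec_zero_iff x).mp (by rw [star_trivial]; exact h2)
  have hAx : A *ᵥ x = μ • x := by
    rw [Matrix.sub_mulVec, Matrix.smul_mulVec, Matrix.one_mulVec, sub_eq_zero] at hMx
    exact hMx.symm
  obtain ⟨u, -, hu'⟩ := Finset.exists_max_image Finset.univ x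
    ⟨Classical.arbitrary V, Finset.mem_univ _⟩
  have hu : ∀ w, x w ≤ x u := fun w => hu' w (Finset.mem_univ w)
  have hxu : 0 < x u := by
    rcases (abs_nonneg (v u)).lt_or_eq with h | h
    · exact h
    · exfalso
      apply hvne
      funext i
      have h1 : x i ≤ 0 := (hu i).trans (le_of_eq h.symm)
      have h2 : 0 ≤ x i := abs_nonneg _
      have h3 : |v i| = 0 := le_antisymm h1 h2
      simpa using h3
  refine ⟨μ, (x u)⁻¹ • x, u, hsSup, ?_, ?_, ?_, ?_⟩
  · rw [Matrix.mulVec_smul, hAx, smul_comm]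
  · simp [inv_mul_cancel₀ (ne_of_gt hxu)]
  · intro w
    exact mul_nonneg (inv_nonneg.mpr hxu.le) (abs_nonneg _)
  · intro w
    have h1 : (x u)⁻¹ * x w ≤ (x u)⁻¹ * x u := by
      exact mul_le_mul_of_nonneg_left (hu w) (inv_nonneg.mpr hxu.le)
    simpa [inv_mul_cancel₀ (ne_of_gt hxu)] using h1

private lemma aux_sqrt_final {μ c D : ℝ} (h1 : (μ - c) ^ 2 ≤ D) : μ ≤ c + Real.sqrt D := by
  linarith [Real.le_sqrt_of_sq_le h1]

end auxiliaryHSF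

open Matrix Finset

/-- If `G` is a graph of order `n` with `m` edges and minimum
degree `δ`, then `μ(G) ≤ (δ−1)/2 + √(2m − nδ + (δ+1)²/4)`. -/
theorem stmt_14 {V : Type*} [Fintype V] (n m δ : ℕ)
    (G : SimpleGraph V) [DecidableRel G.Adj]
    (hcard : Fintype.card V = n) (hm : G.edgeSet.ncard = m)
    (hδ : G.minDegree = δ) :
    specRad G ≤ ((δ : ℝ) - 1) / 2 +
      Real.sqrt (2 * (m : ℝ) - (n : ℝ) * δ + ((δ : ℝ) + 1) ^ 2 / 4) := by
  classical
  letI := Classical.decEq V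
  have hAeq : (letI := Classical.decEq V; letI := Classical.decRel G.Adj;
      G.adjMatrix ℝ) = G.adjMatrix ℝ := by
    ext i j
    by_cases h : G.Adj i j <;> simp [SimpleGraph.adjMatrix_apply, h]
  have hspec : specRad G = sSup (spectrum ℝ (G.adjMatrix ℝ)) := by
    unfold specRad
    rw [hAeq]
  rcases isEmpty_or_nonempty V with hV | hV
  · have hs : spectrum ℝ (G.adjMatrix ℝ) = ∅ := by
      haveI : Subsingleton (Matrix V V ℝ) := ⟨fun a b => by ext i j; exact isEmptyElim i⟩
      ext r
      simp only [Set.mem_empty_iff_false, iff_false]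
      intro hr
      exact (spectrum.mem_iff.mp hr) (isUnit_of_subsingleton _)
    have hn0 : (n : ℝ) = 0 := by rw [← hcard]; simp
    have hm0 : (m : ℝ) = 0 := by
      have he : G.edgeSet = ∅ := by
        haveI : IsEmpty (Sym2 V) := ⟨fun e => Sym2.ind (fun a _ => isEmptyElim a) e⟩
        exact Set.eq_empty_of_isEmpty _
      rw [← hm, he, Set.ncard_empty]
      simp
    rw [hspec, hs, Real.sSup_empty, hn0, hm0]
    have hδ0 : (0 : ℝ) ≤ (δ : ℝ) := Nat.cast_nonneg δ
    have h := Real.le_sqrt_of_sq_le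
      (show (((1 : ℝ) - δ) / 2) ^ 2 ≤ 2 * 0 - 0 * δ + ((δ : ℝ) + 1) ^ 2 / 4 by nlinarith)
    linarith
  · obtain ⟨μ, y, u, hsSup, heig, hyu, hy0, hy1⟩ := aux_perron G
    rw [hspec, hsSup]
    classical
    set A := G.adjMatrix ℝ with hAdef
    have hApos : ∀ i j, 0 ≤ A i j := by
      intro i j; by_cases h : G.Adj i j <;> simp [hAdef, SimpleGraph.adjMatrix_apply, h]
    have hAle1 : ∀ i j, A i j ≤ 1 := by
      intro i j; by_cases h : G.Adj i j <;> simp [hAdef, SimpleGraph.adjMatrix_apply, h]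
    have hAdiag : ∀ i, A i i = 0 := by
      intro i; simp [hAdef, SimpleGraph.adjMatrix_apply]
    have hsym : ∀ t w, A t w = A w t := fun t w =>
      congrFun (congrFun (SimpleGraph.transpose_adjMatrix G (α := ℝ)) w) t
    set S := ∑ w, y w with hS
    set d : V → ℝ := fun w => (G.degree w : ℝ) with hd
    have hrow : ∀ w, ∑ t, A t w = d w := by
      intro w
      have h1 : (A *ᵥ fun _ => (1 : ℝ)) w = G.degree w * 1 :=
        SimpleGraph.adjMatrix_mulVec_const_apply
      simp only [Matrix.mulVec, dotProduct, mul_one] at h1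
      calc ∑ t, A t w = ∑ t, A w t := Finset.sum_congr rfl fun t _ => hsym t w
        _ = d w := by rw [h1]
    have hdy : μ * S = ∑ t, d t * y t := by
      calc μ * S = ∑ w, μ * y w := by rw [hS, Finset.mul_sum]
        _ = ∑ w, (A *ᵥ y) w := by rw [heig]; simp
        _ = ∑ w, ∑ t, A w t * y t := rfl
        _ = ∑ t, ∑ w, A w t * y t := Finset.sum_comm
        _ = ∑ t, (∑ w, A w t) * y t := by simp [Finset.sum_mul]
        _ = ∑ t, d t * y t := by simp_rw [hrow]
    have hδd : ∀ w, (δ : ℝ) ≤ d w := by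
      intro w
      have h1 := G.minDegree_le_degree w
      rw [hδ] at h1
      simp only [hd]
      exact_mod_cast h1
    have hS1 : 1 ≤ S := by
      rw [← hyu]
      exact Finset.single_le_sum (fun i _ => hy0 i) (Finset.mem_univ u)
    have hμδ : (δ : ℝ) ≤ μ := by
      have h1 : (δ : ℝ) * S ≤ μ * S := by
        rw [hdy, hS, Finset.mul_sum]
        exact Finset.sum_le_sum fun w _ => mul_le_mul_of_nonneg_right (hδd w) (hy0 w)
      exact le_of_mul_le_mul_right h1 (lt_of_lt_of_le zero_lt_one hS1)
    have hAyu : ∑ w, A u w * y w = μ := by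
      have h1 := congrFun heig u
      simp only [Pi.smul_apply, smul_eq_mul, hyu, mul_one] at h1
      exact h1
    have hstep2 : μ * μ + μ ≤ μ * S := by
      have huu : (A *ᵥ (A *ᵥ y)) u = μ * μ := by
        rw [heig, Matrix.mulVec_smul, heig]
        simp [hyu]
      have hcw : ∀ w, ∑ t, A u t * A t w ≤ d w - A u w := by
        intro w
        have h0 : ∑ t ∈ Finset.univ.erase u, A u t * A t w + A u u * A u w = ∑ t, A u t * A t w :=
          Finset.sum_erase_add _ _ (Finset.mem_univ u)
        have h1 : ∑ t ∈ Finset.univ.erase u, A u t * A t w ≤ ∑ t ∈ Finset.univ.erase u, A t w :=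
          Finset.sum_le_sum fun t _ => by
            calc A u t * A t w ≤ 1 * A t w :=
                  mul_le_mul_of_nonneg_right (hAle1 u t) (hApos t w)
              _ = A t w := one_mul _
        have h2 : ∑ t ∈ Finset.univ.erase u, A t w + A u w = ∑ t, A t w :=
          Finset.sum_erase_add _ _ (Finset.mem_univ u)
        have h3 := hrow w
        have h5 : A u u * A u w = 0 := by rw [hAdiag u, zero_mul]
        linarith [h0, h1, h2, h3, h5]
      have hval : (A *ᵥ (A *ᵥ y)) u = ∑ w, (∑ t, A u t * A t w) * y w := by
        calc (A *ᵥ (A *ᵥ y)) u = ∑ t, A u t * (∑ w, A t w * y w) := rfl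
          _ = ∑ t, ∑ w, A u t * (A t w * y w) := by simp [Finset.mul_sum]
          _ = ∑ w, ∑ t, A u t * (A t w * y w) := Finset.sum_comm
          _ = ∑ w, (∑ t, A u t * A t w) * y w := by simp [Finset.sum_mul, mul_assoc]
      have h3 : ∑ w, (∑ t, A u t * A t w) * y w ≤ ∑ w, (d w - A u w) * y w :=
        Finset.sum_le_sum fun w _ => mul_le_mul_of_nonneg_right (hcw w) (hy0 w)
      have h4 : ∑ w, (d w - A u w) * y w = μ * S - μ := by
        calc ∑ w, (d w - A u w) * y w = ∑ w, (d w * y w - A u w * y w) :=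
              Finset.sum_congr rfl fun w _ => by ring
          _ = ∑ w, d w * y w - ∑ w, A u w * y w := Finset.sum_sub_distrib _ _
          _ = μ * S - μ := by rw [← hdy, hAyu]
      rw [hval] at huu
      linarith
    have h2m : 2 * (m : ℝ) = ∑ w, d w := by
      have h1 := G.sum_degrees_eq_twice_card_edges
      have hm' : G.edgeFinset.card = m := by
        rw [← hm, ← SimpleGraph.coe_edgeFinset, Set.ncard_coe_finset]
      simp only [hd]
      rw [← Nat.cast_sum, h1, hm']
      push_cast
      ring
    have h2m' : μ * S + (δ : ℝ) * ((n : ℝ) - S) ≤ 2 * m := by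
      have h1 : ∑ w, (δ : ℝ) * (1 - y w) ≤ ∑ w, d w * (1 - y w) :=
        Finset.sum_le_sum fun w _ =>
          mul_le_mul_of_nonneg_right (hδd w) (by linarith [hy1 w])
      have h2 : ∑ w, d w = ∑ w, d w * y w + ∑ w, d w * (1 - y w) := by
        rw [← Finset.sum_add_distrib]
        exact Finset.sum_congr rfl fun w _ => by ring
      have h3 : ∑ w, (δ : ℝ) * (1 - y w) = (δ : ℝ) * ((n : ℝ) - S) := by
        have h4 : ∑ w, ((1 : ℝ) - y w) = (n : ℝ) - S := by
          rw [Finset.sum_sub_distrib, Finset.sum_const, Finset.card_univ, hcard, hS,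
            nsmul_eq_mul, mul_one]
        rw [← Finset.mul_sum, h4]
      linarith [hdy, h2m, h1, h2, h3]
    have hn1 : 1 ≤ (n : ℝ) := by
      rw [← hcard]
      exact_mod_cast Fintype.card_pos
    have hδ0 : (0 : ℝ) ≤ (δ : ℝ) := Nat.cast_nonneg δ
    have hμ0 : (0 : ℝ) ≤ μ := le_trans hδ0 hμδ
    have hkey : μ ^ 2 - ((δ : ℝ) - 1) * μ ≤ 2 * (m : ℝ) - ((n : ℝ) - 1) * δ := by
      rcases hμ0.lt_or_eq with hpos | hzero
      · have hSμ : μ + 1 ≤ S := by nlinarith [hstep2]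
        have hprod : 0 ≤ (μ - (δ : ℝ)) * (S - μ - 1) :=
          mul_nonneg (by linarith) (by linarith)
        nlinarith [hprod, h2m']
      · have hδ0' : (δ : ℝ) = 0 := le_antisymm (hzero ▸ hμδ) hδ0
        have hm0 : (0 : ℝ) ≤ (m : ℝ) := Nat.cast_nonneg m
        rw [← hzero, hδ0']
        nlinarith [hm0]
    exact aux_sqrt_final (by nlinarith [hkey])
end

section
/- Let G be a graph with non-empty edge set. Then μ(G) ≥ min{√(d(u)·d(v)) : uv ∈ E(G)}. Moreover, if G is connected, then equality holds if and only if G is regular or G is a bipartite semi-regular graph. -/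
open SimpleGraph

section Stmt16Helpers
open Matrix Finset

variable {V : Type*} [Fintype V] [DecidableEq V]

private lemma stmt16_spec_eq_range (A : Matrix V V ℝ) (hA : A.IsHermitian) :
    spectrum ℝ A = Set.range hA.eigenvalues := by
  have h1 : A = ((Unitary.toUnits hA.eigenvectorUnitary : (Matrix V V ℝ)ˣ) : Matrix V V ℝ)
      * diagonal (RCLike.ofReal ∘ hA.eigenvalues) *
      (((Unitary.toUnits hA.eigenvectorUnitary)⁻¹ : (Matrix V V ℝ)ˣ) : Matrix V V ℝ) :=
    hA.spectral_theorem
  rw [congrArg (spectrum ℝ) h1, spectrum.units_conjugate, spectrum_diagonal]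
  congr 1

private lemma stmt16_spec_bddAbove (A : Matrix V V ℝ) (hA : A.IsHermitian) :
    BddAbove (spectrum ℝ A) := by
  rw [stmt16_spec_eq_range A hA]; exact (Set.finite_range _).bddAbove

private lemma stmt16_mem_spectrum_of (A : Matrix V V ℝ) {c : ℝ} {x : V → ℝ} (hx : x ≠ 0)
    (hAx : A *ᵥ x = c • x) : c ∈ spectrum ℝ A := by
  rw [← AlgEquiv.spectrum_eq (Matrix.toLinAlgEquiv' (R := ℝ) (n := V)),
    ← Module.End.hasEigenvalue_iff_mem_spectrum]
  apply Module.End.hasEigenvalue_of_hasEigenvector (x := x)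
  refine ⟨Module.End.mem_eigenspace_iff.mpr ?_, hx⟩
  rw [Matrix.toLinAlgEquiv'_apply, hAx]

private lemma stmt16_spectrum_le_of (A : Matrix V V ℝ) (hA : A.IsHermitian)
    (hnn : ∀ i j, 0 ≤ A i j) (x : V → ℝ) (hx : ∀ v, 0 < x v) (c : ℝ)
    (hAx : ∀ u, (A *ᵥ x) u ≤ c * x u) :
    ∀ lam ∈ spectrum ℝ A, lam ≤ c := by
  intro lam hl
  rw [stmt16_spec_eq_range A hA] at hl
  obtain ⟨i, rfl⟩ := hl
  set y : V → ℝ := ⇑(hA.eigenvectorBasis i) with hy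
  have hy0 : y ≠ 0 := by
    intro h
    exact hA.eigenvectorBasis.orthonormal.ne_zero i (by ext j; exact congrFun h j)
  have hAy : A *ᵥ y = hA.eigenvalues i • y := hA.mulVec_eigenvectorBasis i
  obtain ⟨w, hw⟩ := Function.ne_iff.mp hy0
  have hne : (Finset.univ : Finset V).Nonempty := ⟨w, mem_univ w⟩
  obtain ⟨u, -, hu⟩ := Finset.exists_max_image Finset.univ (fun v => |y v| / x v) hne
  set r := |y u| / x u with hrdef
  have hr : ∀ v, |y v| ≤ r * x v := fun v => by
    have := hu v (mem_univ v)
    exact (div_le_iff₀ (hx v)).mp this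
  have hrpos : 0 < r := by
    have h1 : 0 < |y w| / x w := div_pos (abs_pos.mpr hw) (hx w)
    exact lt_of_lt_of_le h1 (hu w (mem_univ w))
  have hyu : |y u| = r * x u := by
    rw [hrdef, div_mul_cancel₀ _ (hx u).ne']
  have h1 : |(A *ᵥ y) u| ≤ r * (A *ᵥ x) u := by
    have e1 : (A *ᵥ y) u = ∑ v, A u v * y v := rfl
    have e2 : (A *ᵥ x) u = ∑ v, A u v * x v := rfl
    rw [e1, e2, Finset.mul_sum]
    calc |∑ v, A u v * y v| ≤ ∑ v, |A u v * y v| := Finset.abs_sum_le_sum_abs _ _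
      _ ≤ ∑ v, r * (A u v * x v) := by
          apply Finset.sum_le_sum
          intro v _
          rw [abs_mul, abs_of_nonneg (hnn u v)]
          calc A u v * |y v| ≤ A u v * (r * x v) :=
                mul_le_mul_of_nonneg_left (hr v) (hnn u v)
            _ = r * (A u v * x v) := by ring
  have h2 : |hA.eigenvalues i| * |y u| ≤ c * |y u| := by
    have habs : |(A *ᵥ y) u| = |hA.eigenvalues i| * |y u| := by
      rw [hAy]; simp [abs_mul]
    rw [habs] at h1
    calc |hA.eigenvalues i| * |y u| ≤ r * (A *ᵥ x) u := h1
      _ ≤ r * (c * x u) := mul_le_mul_of_nonneg_left (hAx u) hrpos.le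
      _ = c * (r * x u) := by ring
      _ = c * |y u| := by rw [hyu]
  have hyu0 : 0 < |y u| := by rw [hyu]; exact mul_pos hrpos (hx u)
  calc hA.eigenvalues i ≤ |hA.eigenvalues i| := le_abs_self _
    _ ≤ c := le_of_mul_le_mul_right (by linarith [h2]) hyu0

private lemma stmt16_rayleigh_le (A : Matrix V V ℝ) (hA : A.IsHermitian)
    (hbdd : BddAbove (spectrum ℝ A)) (x : V → ℝ) :
    x ⬝ᵥ (A *ᵥ x) ≤ sSup (spectrum ℝ A) * (x ⬝ᵥ x) := by
  have hle : ∀ i, hA.eigenvalues i ≤ sSup (spectrum ℝ A) := fun i =>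
    le_csSup hbdd (by rw [stmt16_spec_eq_range A hA]; exact Set.mem_range_self i)
  obtain ⟨W, hWdef⟩ : ∃ W', (hA.eigenvectorUnitary : Matrix V V ℝ) = W' := ⟨_, rfl⟩
  obtain ⟨y, hy⟩ : ∃ y, (star W *ᵥ x : V → ℝ) = y := ⟨_, rfl⟩
  have hsp' : A = W * diagonal hA.eigenvalues * star W := by
    have := hA.spectral_theorem
    simp only [Unitary.conjStarAlgAut_apply, Unitary.coe_star] at this
    rw [hWdef] at this
    exact this
  have hWW : W * star W = 1 := by
    rw [← hWdef]
    exact Matrix.mem_unitaryGroup_iff.mp hA.eigenvectorUnitary.2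
  have hvecW : x ᵥ* W = y := by
    rw [← hy, Matrix.star_eq_conjTranspose, Matrix.conjTranspose_eq_transpose_of_trivial,
      Matrix.mulVec_transpose]
  have hxx : x ⬝ᵥ x = y ⬝ᵥ y := by
    conv_rhs => rw [← hy]
    rw [Matrix.dotProduct_mulVec, hy, ← hvecW, Matrix.vecMul_vecMul, hWW, Matrix.vecMul_one]
  have hAx : x ⬝ᵥ (A *ᵥ x) = ∑ i, hA.eigenvalues i * (y i * y i) :=
    calc x ⬝ᵥ (A *ᵥ x)
        = x ⬝ᵥ ((W * diagonal hA.eigenvalues * star W) *ᵥ x) := by rw [← hsp']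
      _ = x ⬝ᵥ ((W * diagonal hA.eigenvalues) *ᵥ (star W *ᵥ x)) := by
            rw [← Matrix.mulVec_mulVec]
      _ = (x ᵥ* (W * diagonal hA.eigenvalues)) ⬝ᵥ y := by rw [Matrix.dotProduct_mulVec, hy]
      _ = ((x ᵥ* W) ᵥ* diagonal hA.eigenvalues) ⬝ᵥ y := by rw [← Matrix.vecMul_vecMul]
      _ = (y ᵥ* diagonal hA.eigenvalues) ⬝ᵥ y := by rw [hvecW]
      _ = ∑ i, hA.eigenvalues i * (y i * y i) := by
            simp only [dotProduct, Matrix.vecMul_diagonal]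
            exact Finset.sum_congr rfl fun i _ => by ring
  rw [hAx, hxx, show y ⬝ᵥ y = ∑ i, y i * y i from rfl, Finset.mul_sum]
  exact Finset.sum_le_sum fun i _ =>
    mul_le_mul_of_nonneg_right (hle i) (mul_self_nonneg _)

end Stmt16Helpers

open Matrix Finset in
/-- For a graph `G` with non-empty edge set,
`μ(G) ≥ min{√(d(u)d(v)) : uv ∈ E(G)}`; moreover, if `G` is connected then
equality holds if and only if `G` is regular or bipartite semi-regular. -/
theorem stmt_16 {V : Type*} [Fintype V] [DecidableEq V]
    (G : SimpleGraph V) [DecidableRel G.Adj] (hne : G.edgeSet.Nonempty) :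
    sInf {x : ℝ | ∃ u v, G.Adj u v ∧
        x = Real.sqrt ((G.degree u : ℝ) * (G.degree v : ℝ))} ≤ specRad G ∧
    (G.Connected →
      (specRad G = sInf {x : ℝ | ∃ u v, G.Adj u v ∧
          x = Real.sqrt ((G.degree u : ℝ) * (G.degree v : ℝ))} ↔
        (∃ d, G.IsRegularOfDegree d) ∨
        ∃ (s : Set V) (d₁ d₂ : ℕ),
          (∀ u v, G.Adj u v → (u ∈ s ↔ v ∉ s)) ∧
          (∀ v ∈ s, G.degree v = d₁) ∧ (∀ v ∉ s, G.degree v = d₂))) := by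
  obtain ⟨u0, v0, h0⟩ : ∃ u v, G.Adj u v := by
    obtain ⟨e, he⟩ := hne
    induction e using Sym2.ind with
    | _ u v => exact ⟨u, v, he⟩
  have hNE : Nonempty V := ⟨u0⟩
  set S : Set ℝ := {x : ℝ | ∃ u v, G.Adj u v ∧
      x = Real.sqrt ((G.degree u : ℝ) * (G.degree v : ℝ))} with hS
  set m := sInf S with hm
  have hA : (G.adjMatrix ℝ).IsHermitian := by
    rw [Matrix.IsHermitian, Matrix.conjTranspose_eq_transpose_of_trivial]
    exact G.isSymm_adjMatrix
  have hbdd : BddAbove (spectrum ℝ (G.adjMatrix ℝ)) := stmt16_spec_bddAbove _ hA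
  have hnn : ∀ i j, 0 ≤ G.adjMatrix ℝ i j := by
    intro i j; rw [SimpleGraph.adjMatrix_apply]; split <;> norm_num
  have hspecRad : specRad G = sSup (spectrum ℝ (G.adjMatrix ℝ)) := by
    unfold specRad
    have h1 : Classical.decRel G.Adj = ‹DecidableRel G.Adj› := Subsingleton.elim _ _
    have h2 : Classical.decEq V = ‹DecidableEq V› := Subsingleton.elim _ _
    rw [h1, h2]
  have hSbdd : BddBelow S := ⟨0, by rintro x ⟨u, v, -, rfl⟩; positivity⟩
  have hmle : ∀ u v, G.Adj u v → m ≤ Real.sqrt ((G.degree u : ℝ) * (G.degree v : ℝ)) :=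
    fun u v h => csInf_le hSbdd ⟨u, v, h, rfl⟩
  set x₀ : V → ℝ := fun v => Real.sqrt (G.degree v) with hx₀def
  have hdot : x₀ ⬝ᵥ (G.adjMatrix ℝ *ᵥ x₀)
      = ∑ u, ∑ v ∈ G.neighborFinset u, Real.sqrt ((G.degree u : ℝ) * (G.degree v : ℝ)) := by
    simp only [dotProduct, SimpleGraph.adjMatrix_mulVec_apply]
    refine Finset.sum_congr rfl fun u _ => ?_
    rw [Finset.mul_sum]
    refine Finset.sum_congr rfl fun v _ => ?_
    rw [Real.sqrt_mul (by positivity)]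
  have hxx : x₀ ⬝ᵥ x₀ = ∑ u, (G.degree u : ℝ) := by
    simp only [dotProduct]
    exact Finset.sum_congr rfl fun u _ => Real.mul_self_sqrt (by positivity)
  have hconstsum : ∀ c : ℝ, (∑ u, ∑ _v ∈ G.neighborFinset u, c) = c * ∑ u, (G.degree u : ℝ) := by
    intro c
    rw [Finset.mul_sum]
    refine Finset.sum_congr rfl fun u _ => ?_
    rw [Finset.sum_const, SimpleGraph.card_neighborFinset_eq_degree, nsmul_eq_mul]
    ring
  have hlower : m * (x₀ ⬝ᵥ x₀) ≤ x₀ ⬝ᵥ (G.adjMatrix ℝ *ᵥ x₀) := by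
    rw [hdot, hxx, ← hconstsum m]
    exact Finset.sum_le_sum fun u _ => Finset.sum_le_sum fun v hv =>
      hmle u v ((SimpleGraph.mem_neighborFinset G u v).mp hv)
  have hxxpos : 0 < x₀ ⬝ᵥ x₀ := by
    rw [hxx]
    have hd0 : 0 < G.degree u0 := (G.degree_pos_iff_exists_adj u0).mpr ⟨v0, h0⟩
    have hd0' : (0:ℝ) < (G.degree u0 : ℝ) := by exact_mod_cast hd0
    refine lt_of_lt_of_le hd0' ?_
    exact Finset.single_le_sum (f := fun v => (G.degree v : ℝ))
      (fun v _ => by positivity) (mem_univ u0)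
  have hray := stmt16_rayleigh_le _ hA hbdd x₀
  have hpart1 : m ≤ specRad G := by
    rw [hspecRad]
    exact le_of_mul_le_mul_right (by linarith) hxxpos
  refine ⟨hpart1, ?_⟩
  intro hconn
  have hdegpos : ∀ v : V, 0 < G.degree v := by
    intro v
    rw [SimpleGraph.degree_pos_iff_exists_adj]
    obtain ⟨w, hwv⟩ : ∃ w : V, w ≠ v := by
      by_cases hv : v = u0
      · exact ⟨v0, by rw [hv]; exact h0.ne'⟩
      · exact ⟨u0, fun hh => hv hh.symm⟩
    obtain ⟨p⟩ := hconn.preconnected v w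
    cases p with
    | nil => exact absurd rfl hwv
    | cons h' _ => exact ⟨_, h'⟩
  constructor
  · -- forward: equality implies regular or bipartite semi-regular
    intro heq
    have hub : x₀ ⬝ᵥ (G.adjMatrix ℝ *ᵥ x₀) ≤ m * (x₀ ⬝ᵥ x₀) := by
      calc x₀ ⬝ᵥ (G.adjMatrix ℝ *ᵥ x₀)
          ≤ sSup (spectrum ℝ (G.adjMatrix ℝ)) * (x₀ ⬝ᵥ x₀) := hray
        _ = m * (x₀ ⬝ᵥ x₀) := by rw [← hspecRad, heq]
    have hall_eq : ∀ u v, G.Adj u v →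
        Real.sqrt ((G.degree u : ℝ) * (G.degree v : ℝ)) = m := by
      by_contra hc
      push_neg at hc
      obtain ⟨u1, v1, hadj1, hne1⟩ := hc
      have hgt : m < Real.sqrt ((G.degree u1 : ℝ) * (G.degree v1 : ℝ)) :=
        lt_of_le_of_ne (hmle u1 v1 hadj1) (Ne.symm hne1)
      have hstrict : (∑ u, ∑ _v ∈ G.neighborFinset u, m)
          < ∑ u, ∑ v ∈ G.neighborFinset u,
              Real.sqrt ((G.degree u : ℝ) * (G.degree v : ℝ)) := by
        apply Finset.sum_lt_sum
        · intro u _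
          exact Finset.sum_le_sum fun v hv =>
            hmle u v ((SimpleGraph.mem_neighborFinset G u v).mp hv)
        · refine ⟨u1, mem_univ u1, ?_⟩
          apply Finset.sum_lt_sum
          · intro v hv
            exact hmle u1 v ((SimpleGraph.mem_neighborFinset G u1 v).mp hv)
          · exact ⟨v1, (SimpleGraph.mem_neighborFinset G u1 v1).mpr hadj1, hgt⟩
      rw [hconstsum m, ← hxx, ← hdot] at hstrict
      linarith
    have hprod : ∀ u v, G.Adj u v → (G.degree u : ℝ) * (G.degree v : ℝ) = m ^ 2 := by
      intro u v h
      have h1 := hall_eq u v h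
      have h2 : (0:ℝ) ≤ (G.degree u : ℝ) * (G.degree v : ℝ) := by positivity
      rw [← h1, Real.sq_sqrt h2]
    have hcancel : ∀ u v u' v', G.Adj u v → G.Adj u' v' → G.degree u = G.degree u'
        → G.degree v = G.degree v' := by
      intro u v u' v' h h' hd
      have e1 := hprod u v h
      have e2 := hprod u' v' h'
      have hdu : (0:ℝ) < (G.degree u : ℝ) := by exact_mod_cast hdegpos u
      have hcast : (G.degree u : ℝ) = (G.degree u' : ℝ) := by exact_mod_cast hd
      have : (G.degree v : ℝ) = (G.degree v' : ℝ) := by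
        apply mul_left_cancel₀ hdu.ne'
        rw [e1, hcast, e2]
      exact_mod_cast this
    have hstep : ∀ u v, G.Adj u v → G.degree u = G.degree u0 → G.degree v = G.degree v0 :=
      fun u v h hu => hcancel u v u0 v0 h h0 hu
    have hstep' : ∀ u v, G.Adj u v → G.degree u = G.degree v0 → G.degree v = G.degree u0 :=
      fun u v h hu => hcancel u v v0 u0 h h0.symm hu
    have hwalk : ∀ (x w : V) (p : G.Walk x w),
        (G.degree x = G.degree u0 ∨ G.degree x = G.degree v0) →
        (G.degree w = G.degree u0 ∨ G.degree w = G.degree v0) := by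
      intro x w p
      induction p with
      | nil => exact id
      | cons h' q ih =>
        intro hx
        apply ih
        rcases hx with hx | hx
        · exact Or.inr (hstep _ _ h' hx)
        · exact Or.inl (hstep' _ _ h' hx)
    have hall : ∀ w, G.degree w = G.degree u0 ∨ G.degree w = G.degree v0 := by
      intro w
      obtain ⟨p⟩ := hconn.preconnected u0 w
      exact hwalk u0 w p (Or.inl rfl)
    by_cases hab : G.degree u0 = G.degree v0
    · left
      exact ⟨G.degree u0, fun v => (hall v).elim id (fun h => h.trans hab.symm)⟩
    · right
      refine ⟨{v | G.degree v = G.degree u0}, G.degree u0, G.degree v0, ?_,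
        fun v hv => hv, ?_⟩
      · intro u v huv
        simp only [Set.mem_setOf_eq]
        rcases hall u with hu | hu
        · have hv : G.degree v = G.degree v0 := hstep u v huv hu
          exact ⟨fun _ hva => hab (hva ▸ hv), fun _ => hu⟩
        · have hv : G.degree v = G.degree u0 := hstep' u v huv hu
          exact ⟨fun huu => absurd huu (by rw [hu]; exact fun hh => hab hh.symm),
            fun hnv => absurd hv hnv⟩
      · intro v hv
        rcases hall v with h | h
        · exact absurd h hv
        · exact h
  · -- backward
    rintro (⟨d, hreg⟩ | ⟨s, d₁, d₂, hcross, hd1, hd2⟩)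
    · -- regular
      have hSsing : S = {(d:ℝ)} := by
        ext x
        simp only [hS, Set.mem_setOf_eq, Set.mem_singleton_iff]
        constructor
        · rintro ⟨u, v, h, rfl⟩
          rw [hreg u, hreg v, Real.sqrt_mul_self (Nat.cast_nonneg d)]
        · rintro rfl
          exact ⟨u0, v0, h0,
            by rw [hreg u0, hreg v0, Real.sqrt_mul_self (Nat.cast_nonneg d)]⟩
      have hmd : m = (d:ℝ) := by rw [hm, hSsing, csInf_singleton]
      have heig : G.adjMatrix ℝ *ᵥ (fun _ => (1:ℝ)) = (d:ℝ) • (fun _ => (1:ℝ)) := by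
        ext u
        rw [SimpleGraph.adjMatrix_mulVec_apply]
        simp [hreg u]
      have hone : (fun _ => (1:ℝ)) ≠ (0 : V → ℝ) := by
        intro hh
        have := congrFun hh u0
        norm_num at this
      have hmem : (d:ℝ) ∈ spectrum ℝ (G.adjMatrix ℝ) :=
        stmt16_mem_spectrum_of _ hone heig
      have hup : ∀ lam ∈ spectrum ℝ (G.adjMatrix ℝ), lam ≤ (d:ℝ) := by
        apply stmt16_spectrum_le_of _ hA hnn (fun _ => (1:ℝ)) (fun _ => one_pos)
        intro u
        rw [congrFun heig u]
        simp
      rw [hspecRad, hmd]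
      exact le_antisymm (Real.sSup_le hup (by positivity)) (le_csSup hbdd hmem)
    · -- bipartite semi-regular
      set c := Real.sqrt ((d₁:ℝ) * (d₂:ℝ)) with hc
      have hedgeval : ∀ u v, G.Adj u v →
          Real.sqrt ((G.degree u : ℝ) * (G.degree v : ℝ)) = c := by
        intro u v h
        by_cases hu : u ∈ s
        · have hv : v ∉ s := (hcross u v h).mp hu
          rw [hd1 u hu, hd2 v hv]
        · have hv : v ∈ s := by
            by_contra hv
            exact hu ((hcross u v h).mpr hv)
          rw [hd2 u hu, hd1 v hv, mul_comm]
      have hSsing : S = {c} := by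
        ext x
        simp only [hS, Set.mem_setOf_eq, Set.mem_singleton_iff]
        constructor
        · rintro ⟨u, v, h, rfl⟩
          exact hedgeval u v h
        · rintro rfl
          exact ⟨u0, v0, h0, (hedgeval u0 v0 h0).symm⟩
      have hmc : m = c := by rw [hm, hSsing, csInf_singleton]
      have hsq1 : Real.sqrt (d₁:ℝ) * Real.sqrt (d₁:ℝ) = (d₁:ℝ) :=
        Real.mul_self_sqrt (Nat.cast_nonneg _)
      have hsq2 : Real.sqrt (d₂:ℝ) * Real.sqrt (d₂:ℝ) = (d₂:ℝ) :=
        Real.mul_self_sqrt (Nat.cast_nonneg _)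
      have hcmul : c = Real.sqrt (d₁:ℝ) * Real.sqrt (d₂:ℝ) :=
        Real.sqrt_mul (Nat.cast_nonneg _) _
      have heig : G.adjMatrix ℝ *ᵥ x₀ = c • x₀ := by
        ext u
        rw [SimpleGraph.adjMatrix_mulVec_apply]
        have hrhs : (c • x₀) u = c * Real.sqrt (G.degree u : ℝ) := rfl
        by_cases hu : u ∈ s
        · have hnb : ∀ v ∈ G.neighborFinset u, x₀ v = Real.sqrt (d₂:ℝ) := by
            intro v hv
            have hadj := (SimpleGraph.mem_neighborFinset G u v).mp hv
            have hvs : v ∉ s := (hcross u v hadj).mp hu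
            simp [hx₀def, hd2 v hvs]
          rw [Finset.sum_congr rfl hnb, Finset.sum_const,
            SimpleGraph.card_neighborFinset_eq_degree, hd1 u hu, hrhs, hd1 u hu,
            nsmul_eq_mul, hcmul]
          linear_combination Real.sqrt (d₂:ℝ) * hsq1.symm
        · have hus : G.degree u = d₂ := hd2 u hu
          have hnb : ∀ v ∈ G.neighborFinset u, x₀ v = Real.sqrt (d₁:ℝ) := by
            intro v hv
            have hadj := (SimpleGraph.mem_neighborFinset G u v).mp hv
            have hvs : v ∈ s := by
              by_contra hvs
              exact hu ((hcross u v hadj).mpr hvs)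
            simp [hx₀def, hd1 v hvs]
          rw [Finset.sum_congr rfl hnb, Finset.sum_const,
            SimpleGraph.card_neighborFinset_eq_degree, hus, hrhs, hus,
            nsmul_eq_mul, hcmul]
          linear_combination Real.sqrt (d₁:ℝ) * hsq2.symm
      have hx₀ne : x₀ ≠ 0 := by
        intro hh
        have h1 := congrFun hh u0
        have h2 : (0:ℝ) < Real.sqrt (G.degree u0 : ℝ) :=
          Real.sqrt_pos.mpr (by exact_mod_cast hdegpos u0)
        rw [hx₀def] at h1
        simp only [Pi.zero_apply] at h1
        linarith [h2, h1.ge, h1.le]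
      have hmem : c ∈ spectrum ℝ (G.adjMatrix ℝ) :=
        stmt16_mem_spectrum_of _ hx₀ne heig
      have hup : ∀ lam ∈ spectrum ℝ (G.adjMatrix ℝ), lam ≤ c := by
        apply stmt16_spectrum_le_of _ hA hnn x₀
          (fun v => Real.sqrt_pos.mpr (by exact_mod_cast hdegpos v))
        intro u
        rw [congrFun heig u]
        exact le_of_eq rfl
      rw [hspecRad, hmc]
      exact le_antisymm (Real.sSup_le hup (Real.sqrt_nonneg _)) (le_csSup hbdd hmem)
end
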